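/- arXiv:1811.10110 — 3 statements merged into one kernel-verified Lean document; each statement's English description precedes it below -/
import Mathlib

section
/- Let d ≥ 2, Σ a d×d positive definite real matrix, and α, μ ∈ ℝ^d with all components positive. Define g(t) = (1/t)·inf_{x ≥ α+μt} xᵀΣ⁻¹x for t > 0 (and g(0) = ∞). Then g is convex on (0,∞) and attains its unique minimum over [0,∞) at a point t₀ > 0; moreover, if I denotes the essential index set of the quadratic programming problem P_Σ(b) with b = α + μt₀, then t₀ = sqrt( (α_Iᵀ Σ_{II}⁻¹ α_I) / (μ_Iᵀ Σ_{II}⁻¹ μ_I) ) and inf_{t ≥ 0} g(t) = g(t₀) = (1/t₀)·b_Iᵀ Σ_{II}⁻¹ b_I. -/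
open MeasureTheory ProbabilityTheory Filter Asymptotics Matrix
open scoped ENNReal NNReal

noncomputable section

variable {Ω : Type*} [MeasureSpace Ω]

/-- `W` is a standard one-dimensional Brownian motion started at `0`:
continuous paths, `W 0 = 0`, Gaussian increments `W t - W s ∼ N(0, t-s)`,
and independent increments. -/
def IsStdBM (W : ℝ → Ω → ℝ) : Prop :=
  (∀ ω, W 0 ω = 0) ∧
  (∀ ω, Continuous fun t => W t ω) ∧
  (∀ t, Measurable (W t)) ∧
  (∀ s t : ℝ, 0 ≤ s → s ≤ t →
    Measure.map (fun ω => W t ω - W s ω) volume = gaussianReal 0 (Real.toNNReal (t - s))) ∧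
  (∀ n : ℕ, ∀ t : ℕ → ℝ, Monotone t → 0 ≤ t 0 →
    iIndepFun
      (fun (k : Fin n) ω => W (t (k + 1)) ω - W (t k) ω) volume)

/-- `B` is a standard `d`-dimensional Brownian motion with independent coordinates. -/
def IsStdBMd (d : ℕ) (B : ℝ → Ω → Fin d → ℝ) : Prop :=
  (∀ i : Fin d, IsStdBM fun t ω => B t ω i) ∧
  iIndepFun (fun (i : Fin d) ω => fun t => B t ω i) volume

/-- The quadratic form `x ↦ xᵀ M x`. -/
def qf {d : ℕ} (M : Matrix (Fin d) (Fin d) ℝ) (x : Fin d → ℝ) : ℝ := x ⬝ᵥ M.mulVec x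

/-- The sub-block `M_{I J}` of a matrix. -/
def sub {d : ℕ} (M : Matrix (Fin d) (Fin d) ℝ) (I J : Finset (Fin d)) : Matrix ↥I ↥J ℝ :=
  M.submatrix Subtype.val Subtype.val

/-- The subvector `b_I`. -/
def subv {d : ℕ} (b : Fin d → ℝ) (I : Finset (Fin d)) : ↥I → ℝ := fun i => b i

/-- The vector `M_{II}⁻¹ b_I`. -/
def wvec {d : ℕ} (M : Matrix (Fin d) (Fin d) ℝ) (I : Finset (Fin d)) (b : Fin d → ℝ) : ↥I → ℝ :=
  (sub M I I)⁻¹.mulVec (subv b I)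

/-- The scalar `b_Iᵀ M_{II}⁻¹ b_I`. -/
def subQF {d : ℕ} (M : Matrix (Fin d) (Fin d) ℝ) (I : Finset (Fin d)) (b : Fin d → ℝ) : ℝ :=
  subv b I ⬝ᵥ wvec M I b

/-- The `j`-th entry of `M_{•I} M_{II}⁻¹ b_I`. -/
def rowdot {d : ℕ} (M : Matrix (Fin d) (Fin d) ℝ) (I : Finset (Fin d)) (b : Fin d → ℝ)
    (j : Fin d) : ℝ := ∑ i : ↥I, M j i * wvec M I b i

/-- The Schur-complement block `D_{KK} = M_{KK} - M_{KI} M_{II}⁻¹ M_{IK}`. -/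
def Dmat {d : ℕ} (M : Matrix (Fin d) (Fin d) ℝ) (I K : Finset (Fin d)) : Matrix ↥K ↥K ℝ :=
  sub M K K - sub M K I * (sub M I I)⁻¹ * sub M I K

/-- `g(t) = (1/t) · inf_{x ≥ α + μ t} xᵀ M⁻¹ x`. -/
def gfun {d : ℕ} (M : Matrix (Fin d) (Fin d) ℝ) (αv μv : Fin d → ℝ) (t : ℝ) : ℝ :=
  (1 / t) * sInf ((fun x => qf M⁻¹ x) '' {x | ∀ i, αv i + μv i * t ≤ x i})

/-- `x` solves the quadratic programming problem `P_M(b)`: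
it minimises `yᵀ M⁻¹ y` over `{y : y ≥ b}` (componentwise). -/
def Minimizes {d : ℕ} (M : Matrix (Fin d) (Fin d) ℝ) (b x : Fin d → ℝ) : Prop :=
  b ≤ x ∧ ∀ y, b ≤ y → qf M⁻¹ x ≤ qf M⁻¹ y

/-- `I` is the essential index set of `P_M(b)` with solution `btil`. -/
def EssIdx {d : ℕ} (M : Matrix (Fin d) (Fin d) ℝ) (b btil : Fin d → ℝ)
    (I : Finset (Fin d)) : Prop :=
  I.Nonempty ∧
  (∀ i ∈ I, btil i = b i) ∧
  (∃ i ∈ I, b i ≠ 0) ∧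
  (∀ i : ↥I, 0 < wvec M I b i) ∧
  (∀ j, j ∉ I → btil j = rowdot M I b j) ∧
  (∀ j, j ∉ I → b j ≤ btil j)

/-- Sojourn time (Lebesgue measure) of `{s ∈ [0,t] : X s - μ s > c}` (componentwise). -/
def soj {d : ℕ} (X : ℝ → Ω → Fin d → ℝ) (μv c : Fin d → ℝ) (t : ℝ) (ω : Ω) : ℝ≥0∞ :=
  volume {s : ℝ | 0 ≤ s ∧ s ≤ t ∧ ∀ i, c i < X s ω i - μv i * s}

/-- Total sojourn time of `{s ≥ 0 : X s - μ s > c}` (componentwise). -/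
def sojInf {d : ℕ} (X : ℝ → Ω → Fin d → ℝ) (μv c : Fin d → ℝ) (ω : Ω) : ℝ≥0∞ :=
  volume {s : ℝ | 0 ≤ s ∧ ∀ i, c i < X s ω i - μv i * s}

/-- The cumulative Parisian ruin time at level `r` with (vector) initial capital `c`,
valued in `ℝ≥0∞` (equal to `∞` if ruin never occurs):
`τ = inf {t > 0 : ∫₀ᵗ 1(X(s) - μ s > c) ds > r}`. -/
def tauCPR {d : ℕ} (X : ℝ → Ω → Fin d → ℝ) (μv c : Fin d → ℝ) (r : ℝ) (ω : Ω) : ℝ≥0∞ :=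
  sInf {s : ℝ≥0∞ | ∃ t : ℝ, 0 < t ∧ s = ENNReal.ofReal t ∧ ENNReal.ofReal r < soj X μv c t ω}

/-- Sojourn time of the `I`-coordinates of `X(t) - μ t` above the level `x`. -/
def sojI {d : ℕ} (X : ℝ → Ω → Fin d → ℝ) (μv : Fin d → ℝ) (I : Finset (Fin d))
    (x : ↥I → ℝ) (T : ℝ) (ω : Ω) : ℝ≥0∞ :=
  volume {t : ℝ | 0 ≤ t ∧ t ≤ T ∧ ∀ i : ↥I, x i < X t ω i - μv i * t}

/-- `H_I(r,T)` as an extended-real (Lebesgue) integral over `ℝ^I`. -/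
def HIL {d : ℕ} (X : ℝ → Ω → Fin d → ℝ) (μv : Fin d → ℝ) (M : Matrix (Fin d) (Fin d) ℝ)
    (I : Finset (Fin d)) (b : Fin d → ℝ) (t₀ r T : ℝ) : ℝ≥0∞ :=
  ∫⁻ x : ↥I → ℝ, ENNReal.ofReal (Real.exp ((1 / t₀) * (x ⬝ᵥ wvec M I b))) *
    volume {ω | ENNReal.ofReal r < sojI X μv I x T ω}

/-- `H_I(r,T) = ∫_{ℝ^I} exp((1/t₀) x_Iᵀ Σ_{II}⁻¹ b_I) P(∫₀ᵀ 1((X(t)-μt)_I > x_I) dt > r) dx_I`. -/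
def HIrT {d : ℕ} (X : ℝ → Ω → Fin d → ℝ) (μv : Fin d → ℝ) (M : Matrix (Fin d) (Fin d) ℝ)
    (I : Finset (Fin d)) (b : Fin d → ℝ) (t₀ r T : ℝ) : ℝ :=
  (HIL X μv M I b t₀ r T).toReal

/-- `ν` is a centered Gaussian distribution on `k → ℝ` with covariance matrix `D`. -/
def IsCenteredGaussianCov {k : Type*} [Fintype k] (ν : Measure (k → ℝ))
    (D : Matrix k k ℝ) : Prop :=
  IsProbabilityMeasure ν ∧
  ∀ l : k → ℝ, Measure.map (fun y => l ⬝ᵥ y) ν = gaussianReal 0 (Real.toNNReal (l ⬝ᵥ D.mulVec l))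

/-- `ψ(x) = P(Y > c·x)` for `Y ∼ ν` (componentwise; equals `1` if the index type is empty,
which corresponds to the case `K = ∅`). -/
def psiFun {k : Type*} [Fintype k] (ν : Measure (k → ℝ)) (c : k → ℝ) (x : ℝ) : ℝ :=
  (ν {y | ∀ j, c j * x < y j}).toReal

/-- The vector `t₀^{-1/2} (μ_K - Σ_{KI} Σ_{II}⁻¹ μ_I)` appearing in `ψ`. -/
def cvec {d : ℕ} (M : Matrix (Fin d) (Fin d) ℝ) (I K : Finset (Fin d)) (μv : Fin d → ℝ)
    (t₀ : ℝ) : ↥K → ℝ :=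
  fun j => (1 / Real.sqrt t₀) * (μv j - rowdot M I μv j)

namespace Stmt1Aux

open Matrix Finset

variable {d : ℕ}

/-- extension by zero of a vector on a subset -/
def ext0 (I : Finset (Fin d)) (x : ↥I → ℝ) : Fin d → ℝ :=
  fun j => if h : j ∈ I then x ⟨j, h⟩ else 0

lemma sum_ext0_mul (I : Finset (Fin d)) (x : ↥I → ℝ) (f : Fin d → ℝ) :
    ∑ j, ext0 I x j * f j = ∑ i : ↥I, x i * f i := by
  rw [← Finset.sum_subset (Finset.subset_univ I) (by
    intro j _ hj; simp [ext0, hj])]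
  rw [← Finset.sum_attach I (fun j => ext0 I x j * f j)]
  refine Finset.sum_congr rfl fun i _ => ?_
  simp [ext0, i.2]

lemma dotProduct_ext0 (I : Finset (Fin d)) (x : ↥I → ℝ) (v : Fin d → ℝ) :
    ext0 I x ⬝ᵥ v = ∑ i : ↥I, x i * v i := by
  simp [dotProduct, sum_ext0_mul]

lemma mulVec_ext0 (M : Matrix (Fin d) (Fin d) ℝ) (I : Finset (Fin d)) (x : ↥I → ℝ)
    (j : Fin d) : (M *ᵥ ext0 I x) j = ∑ i : ↥I, M j i * x i := by
  have : (M *ᵥ ext0 I x) j = ∑ k, ext0 I x k * M j k := by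
    simp [mulVec, dotProduct, mul_comm]
  rw [this, sum_ext0_mul]
  exact Finset.sum_congr rfl fun i _ => mul_comm _ _

lemma ext0_ne_zero {I : Finset (Fin d)} {x : ↥I → ℝ} (hx : x ≠ 0) : ext0 I x ≠ 0 := by
  intro h
  apply hx
  funext i
  have := congrFun h i
  simpa [ext0, i.2] using this

lemma posDef_sub {M : Matrix (Fin d) (Fin d) ℝ} (hM : M.PosDef) (I : Finset (Fin d)) :
    (_root_.sub M I I).PosDef := by
  rw [Matrix.posDef_iff_dotProduct_mulVec]
  constructor
  · have h1 := hM.isHermitian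
    ext i j
    have := congrFun (congrFun h1 (i : Fin d)) (j : Fin d)
    simpa [_root_.sub, conjTranspose, Matrix.transpose] using this
  · intro x hx
    have inner : ∀ i : ↥I, (_root_.sub M I I *ᵥ x) i = (M *ᵥ ext0 I x) i := by
      intro i
      rw [mulVec_ext0]
      rfl
    have key : x ⬝ᵥ (_root_.sub M I I) *ᵥ x = ext0 I x ⬝ᵥ M *ᵥ ext0 I x := by
      rw [dotProduct_ext0]
      refine Finset.sum_congr rfl fun i _ => ?_
      rw [inner i]
    have := hM.dotProduct_mulVec_pos (x := ext0 I x) (ext0_ne_zero hx)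
    simp only [star_trivial] at this ⊢
    rw [key]; exact this

end Stmt1Aux
namespace Stmt1Aux
open Matrix
variable {d : ℕ}

lemma qf_nonneg {M : Matrix (Fin d) (Fin d) ℝ} (hM : M.PosSemidef) (x : Fin d → ℝ) :
    0 ≤ qf M x := by simpa [qf] using hM.dotProduct_mulVec_nonneg x

lemma qf_pos {M : Matrix (Fin d) (Fin d) ℝ} (hM : M.PosDef) {x : Fin d → ℝ} (hx : x ≠ 0) :
    0 < qf M x := by simpa [qf] using hM.dotProduct_mulVec_pos hx

lemma qf_eq_zero {M : Matrix (Fin d) (Fin d) ℝ} (hM : M.PosDef) {x : Fin d → ℝ}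
    (h : qf M x ≤ 0) : x = 0 := by
  by_contra hx
  exact absurd h (not_le.2 (qf_pos hM hx))

lemma qf_add (M : Matrix (Fin d) (Fin d) ℝ) (u v : Fin d → ℝ) :
    qf M (u + v) = qf M u + (u ⬝ᵥ M *ᵥ v + v ⬝ᵥ M *ᵥ u) + qf M v := by
  simp [qf, mulVec_add, dotProduct_add, add_dotProduct]; ring

lemma qf_sub' (M : Matrix (Fin d) (Fin d) ℝ) (u v : Fin d → ℝ) :
    qf M (u - v) = qf M u - (u ⬝ᵥ M *ᵥ v + v ⬝ᵥ M *ᵥ u) + qf M v := by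
  simp [qf, mulVec_sub, dotProduct_sub, sub_dotProduct]; ring

lemma qf_smul (M : Matrix (Fin d) (Fin d) ℝ) (c : ℝ) (u : Fin d → ℝ) :
    qf M (c • u) = c ^ 2 * qf M u := by
  simp [qf, mulVec_smul, dotProduct_smul, smul_dotProduct, smul_eq_mul]; ring

lemma qf_smul_add (M : Matrix (Fin d) (Fin d) ℝ) (a b : ℝ) (u v : Fin d → ℝ) :
    qf M (a • u + b • v)
      = a ^ 2 * qf M u + a * b * (u ⬝ᵥ M *ᵥ v + v ⬝ᵥ M *ᵥ u) + b ^ 2 * qf M v := by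
  rw [qf_add, qf_smul, qf_smul]
  simp [mulVec_smul, dotProduct_smul, smul_dotProduct, smul_eq_mul]
  ring

lemma cross_le {M : Matrix (Fin d) (Fin d) ℝ} (hM : M.PosSemidef) (u v : Fin d → ℝ)
    {s : ℝ} (hs : 0 < s) :
    u ⬝ᵥ M *ᵥ v + v ⬝ᵥ M *ᵥ u ≤ s * qf M u + (1 / s) * qf M v := by
  have h0 : 0 ≤ qf M (s • u - v) := qf_nonneg hM _
  rw [qf_sub', qf_smul] at h0
  have h1 : (s • u) ⬝ᵥ M *ᵥ v = s * (u ⬝ᵥ M *ᵥ v) := by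
    simp [smul_dotProduct, smul_eq_mul]
  have h2 : v ⬝ᵥ M *ᵥ (s • u) = s * (v ⬝ᵥ M *ᵥ u) := by
    simp [mulVec_smul, dotProduct_smul, smul_eq_mul]
  rw [h1, h2] at h0
  have hs' : s ≠ 0 := ne_of_gt hs
  have h3 : u ⬝ᵥ M *ᵥ v + v ⬝ᵥ M *ᵥ u ≤ (s ^ 2 * qf M u + qf M v) / s := by
    rw [le_div_iff₀ hs]; nlinarith [h0]
  have h4 : (s ^ 2 * qf M u + qf M v) / s = s * qf M u + 1 / s * qf M v := by
    field_simp
  linarith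

/-- symmetric matrices: `x ⬝ᵥ A y = y ⬝ᵥ A x` -/
lemma dot_symm {ι : Type*} [Fintype ι] {A : Matrix ι ι ℝ} (hA : A.IsHermitian) (x y : ι → ℝ) :
    x ⬝ᵥ A *ᵥ y = y ⬝ᵥ A *ᵥ x := by
  have hAt : Aᵀ = A := by
    ext i j
    have := congrFun (congrFun hA i) j
    simpa [conjTranspose, Matrix.transpose] using this
  rw [Matrix.dotProduct_mulVec, ← Matrix.mulVec_transpose, hAt, dotProduct_comm]

end Stmt1Aux
namespace Stmt1Aux
open Matrix
variable {d : ℕ}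

lemma continuous_qf (M : Matrix (Fin d) (Fin d) ℝ) : Continuous (qf M) := by
  unfold qf dotProduct mulVec
  exact continuous_finset_sum _ fun i _ => (continuous_apply i).mul
    (continuous_finset_sum _ fun j _ => (continuous_const.mul (continuous_apply j)))

lemma isClosed_ge (b : Fin d → ℝ) : IsClosed {x : Fin d → ℝ | b ≤ x} := by
  have : {x : Fin d → ℝ | b ≤ x} = ⋂ i, {x | b i ≤ x i} := by
    ext x; simp [Pi.le_def, Set.mem_iInter]
  rw [this]
  exact isClosed_iInter fun i => isClosed_le continuous_const (continuous_apply i)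

lemma coercive {M : Matrix (Fin d) (Fin d) ℝ} (hM : M.PosDef) (hd : 0 < d) :
    ∃ c : ℝ, 0 < c ∧ ∀ x : Fin d → ℝ, c * ‖x‖ ^ 2 ≤ qf M x := by
  have hne : (Metric.sphere (0 : Fin d → ℝ) 1).Nonempty := by
    haveI : Nonempty (Fin d) := ⟨⟨0, hd⟩⟩
    obtain ⟨x, hx⟩ := exists_norm_eq (Fin d → ℝ) (zero_le_one' ℝ)
    exact ⟨x, by simpa using hx⟩
  obtain ⟨x₀, hx₀mem, hx₀min⟩ :=
    (isCompact_sphere (0 : Fin d → ℝ) 1).exists_isMinOn hne (continuous_qf M).continuousOn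
  have hx₀norm : ‖x₀‖ = 1 := by simpa using hx₀mem
  have hx₀ne : x₀ ≠ 0 := by intro h; rw [h] at hx₀norm; simp at hx₀norm
  refine ⟨qf M x₀, qf_pos hM hx₀ne, fun x => ?_⟩
  rcases eq_or_ne x 0 with rfl | hx
  · simp [qf]
  · have hnx : 0 < ‖x‖ := norm_pos_iff.mpr hx
    have hmem : ‖x‖⁻¹ • x ∈ Metric.sphere (0 : Fin d → ℝ) 1 := by
      simp [norm_smul, abs_of_pos (inv_pos.mpr hnx), inv_mul_cancel₀ (ne_of_gt hnx)]
    have h1 : qf M x₀ ≤ qf M (‖x‖⁻¹ • x) := hx₀min hmem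
    have h2 : qf M (‖x‖⁻¹ • x) = ‖x‖⁻¹ ^ 2 * qf M x := qf_smul M _ x
    rw [h2] at h1
    have h3 : qf M x₀ * ‖x‖ ^ 2 ≤ ‖x‖⁻¹ ^ 2 * qf M x * ‖x‖ ^ 2 :=
      mul_le_mul_of_nonneg_right h1 (by positivity)
    calc qf M x₀ * ‖x‖ ^ 2 ≤ ‖x‖⁻¹ ^ 2 * qf M x * ‖x‖ ^ 2 := h3
      _ = qf M x := by field_simp

lemma qp_exists {M : Matrix (Fin d) (Fin d) ℝ} (hM : M.PosDef) (hd : 0 < d)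
    (b : Fin d → ℝ) : ∃ x, b ≤ x ∧ ∀ y, b ≤ y → qf M x ≤ qf M y := by
  obtain ⟨c, hc, hcoer⟩ := coercive hM hd
  set K : Set (Fin d → ℝ) := {x | b ≤ x} ∩ {x | qf M x ≤ qf M b} with hK
  have hKclosed : IsClosed K :=
    (isClosed_ge b).inter (isClosed_le (continuous_qf M) continuous_const)
  have hKbdd : Bornology.IsBounded K := by
    rw [isBounded_iff_forall_norm_le]
    refine ⟨max 1 (qf M b / c), fun x hx => ?_⟩
    rcases le_or_gt ‖x‖ 1 with h | h
    · exact h.trans (le_max_left _ _)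
    · refine le_trans ?_ (le_max_right _ _)
      have hx1 : (0:ℝ) < ‖x‖ := lt_trans zero_lt_one h
      have h1 : c * ‖x‖ ≤ c * ‖x‖ ^ 2 := by nlinarith [mul_lt_mul_of_pos_left h hx1, hc]
      have h2 : c * ‖x‖ ≤ qf M b := le_trans h1 ((hcoer x).trans hx.2)
      rw [le_div_iff₀ hc]
      linarith [h2]
  have hKcompact : IsCompact K := Metric.isCompact_of_isClosed_isBounded hKclosed hKbdd
  have hbK : b ∈ K := ⟨le_refl b, Set.mem_setOf_eq ▸ le_rfl⟩
  obtain ⟨x, hxK, hxmin⟩ :=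
    hKcompact.exists_isMinOn ⟨b, hbK⟩ (continuous_qf M).continuousOn
  refine ⟨x, hxK.1, fun y hy => ?_⟩
  rcases le_or_gt (qf M y) (qf M b) with h | h
  · exact hxmin ⟨hy, h⟩
  · exact (hxmin hbK).trans h.le

end Stmt1Aux
namespace Stmt1Aux
open Matrix
variable {d : ℕ}

def feas (αv μv : Fin d → ℝ) (t : ℝ) : Set (Fin d → ℝ) := {x | ∀ i, αv i + μv i * t ≤ x i}

lemma feas_eq (αv μv : Fin d → ℝ) (t : ℝ) :
    feas αv μv t = {x | (fun i => αv i + μv i * t) ≤ x} := by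
  ext x; exact (Pi.le_def).symm

lemma gfun_def (M : Matrix (Fin d) (Fin d) ℝ) (αv μv : Fin d → ℝ) (t : ℝ) :
    gfun M αv μv t = (1 / t) * sInf (qf M⁻¹ '' feas αv μv t) := rfl

lemma feas_mem (αv μv : Fin d → ℝ) (t : ℝ) :
    (fun i => αv i + μv i * t) ∈ feas αv μv t := fun i => le_refl _

lemma img_nonempty (M : Matrix (Fin d) (Fin d) ℝ) (αv μv : Fin d → ℝ) (t : ℝ) :
    (qf M⁻¹ '' feas αv μv t).Nonempty :=
  ⟨_, _, feas_mem αv μv t, rfl⟩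

lemma img_bddBelow {M : Matrix (Fin d) (Fin d) ℝ} (hM : M⁻¹.PosSemidef)
    (αv μv : Fin d → ℝ) (t : ℝ) : BddBelow (qf M⁻¹ '' feas αv μv t) := by
  refine ⟨0, fun v hv => ?_⟩
  obtain ⟨x, -, rfl⟩ := hv
  exact qf_nonneg hM x

lemma sInf_le_feas {M : Matrix (Fin d) (Fin d) ℝ} (hM : M⁻¹.PosSemidef)
    {αv μv : Fin d → ℝ} {t : ℝ} {x : Fin d → ℝ} (hx : x ∈ feas αv μv t) :
    sInf (qf M⁻¹ '' feas αv μv t) ≤ qf M⁻¹ x :=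
  csInf_le (img_bddBelow hM αv μv t) ⟨x, hx, rfl⟩

lemma sInf_eq_of_min {M : Matrix (Fin d) (Fin d) ℝ}
    {αv μv : Fin d → ℝ} {t : ℝ} {x : Fin d → ℝ} (hx : x ∈ feas αv μv t)
    (hmin : ∀ y, (fun i => αv i + μv i * t) ≤ y → qf M⁻¹ x ≤ qf M⁻¹ y) :
    sInf (qf M⁻¹ '' feas αv μv t) = qf M⁻¹ x := by
  refine IsLeast.csInf_eq ⟨⟨x, hx, rfl⟩, fun v hv => ?_⟩
  obtain ⟨y, hy, rfl⟩ := hv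
  exact hmin y ((Pi.le_def).mpr hy)

/-- there is a QP minimizer realising the infimum -/
lemma exists_qp_min {M : Matrix (Fin d) (Fin d) ℝ} (hM : M.PosDef) (hd : 0 < d)
    (αv μv : Fin d → ℝ) (t : ℝ) :
    ∃ x ∈ feas αv μv t, sInf (qf M⁻¹ '' feas αv μv t) = qf M⁻¹ x ∧
      ∀ y ∈ feas αv μv t, qf M⁻¹ x ≤ qf M⁻¹ y := by
  obtain ⟨x, hx, hmin⟩ := qp_exists hM.inv hd (fun i => αv i + μv i * t)
  have hxf : x ∈ feas αv μv t := (Pi.le_def).mp hx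
  exact ⟨x, hxf, sInf_eq_of_min hxf hmin, fun y hy => hmin y ((Pi.le_def).mpr hy)⟩

lemma sInf_lb {M : Matrix (Fin d) (Fin d) ℝ} {c : ℝ}
    (hcoer : ∀ x : Fin d → ℝ, c * ‖x‖ ^ 2 ≤ qf M⁻¹ x) (hc : 0 ≤ c)
    {αv μv : Fin d → ℝ} {t : ℝ} (i0 : Fin d) (hb : 0 ≤ αv i0 + μv i0 * t) :
    c * (αv i0 + μv i0 * t) ^ 2 ≤ sInf (qf M⁻¹ '' feas αv μv t) := by
  refine le_csInf (img_nonempty M αv μv t) fun v hv => ?_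
  obtain ⟨x, hx, rfl⟩ := hv
  have h1 : αv i0 + μv i0 * t ≤ ‖x‖ := by
    refine le_trans (hx i0) (le_trans (le_abs_self _) ?_)
    exact norm_le_pi_norm x i0
  have h2 : (αv i0 + μv i0 * t) ^ 2 ≤ ‖x‖ ^ 2 := by nlinarith
  exact le_trans (mul_le_mul_of_nonneg_left h2 hc) (hcoer x)

end Stmt1Aux
namespace Stmt1Aux
open Matrix
variable {d : ℕ}

lemma gfun_convex {S : Matrix (Fin d) (Fin d) ℝ} (hS : S.PosDef) (hd : 0 < d)
    (αv μv : Fin d → ℝ) : ConvexOn ℝ (Set.Ioi (0 : ℝ)) (gfun S αv μv) := by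
  refine ⟨convex_Ioi 0, fun t1 ht1 t2 ht2 a b ha hb hab => ?_⟩
  simp only [smul_eq_mul, Set.mem_Ioi] at *
  set t := a * t1 + b * t2 with hts
  have ht : 0 < t := by
    rcases lt_or_eq_of_le ha with h | h
    · have := mul_pos h ht1
      nlinarith [mul_nonneg hb ht2.le]
    · have hb1 : b = 1 := by linarith
      simp [hts, ← h, hb1, ht2]
  obtain ⟨x1, hx1, hs1, -⟩ := exists_qp_min hS hd αv μv t1
  obtain ⟨x2, hx2, hs2, -⟩ := exists_qp_min hS hd αv μv t2
  set q1 := qf S⁻¹ x1 with hq1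
  set q2 := qf S⁻¹ x2 with hq2
  have hq1n : 0 ≤ q1 := qf_nonneg hS.inv.posSemidef x1
  have hq2n : 0 ≤ q2 := qf_nonneg hS.inv.posSemidef x2
  -- the convex combination is feasible at `t`
  have hxfeas : a • x1 + b • x2 ∈ feas αv μv t := by
    intro i
    have h1 : a * (αv i + μv i * t1) ≤ a * x1 i := mul_le_mul_of_nonneg_left (hx1 i) ha
    have h2 : b * (αv i + μv i * t2) ≤ b * x2 i := mul_le_mul_of_nonneg_left (hx2 i) hb
    have : αv i + μv i * t = a * (αv i + μv i * t1) + b * (αv i + μv i * t2) := by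
      simp only [hts]; linear_combination (-(αv i)) * hab
    simp only [Pi.add_apply, Pi.smul_apply, smul_eq_mul]
    linarith
  -- quadratic bound
  have hcross := cross_le hS.inv.posSemidef x1 x2 (s := t2 / t1) (by positivity)
  have hqx : qf S⁻¹ (a • x1 + b • x2) ≤ a * (t / t1) * q1 + b * (t / t2) * q2 := by
    rw [qf_smul_add]
    have hab2 : 0 ≤ a * b := mul_nonneg ha hb
    have h3 : a * b * (x1 ⬝ᵥ S⁻¹ *ᵥ x2 + x2 ⬝ᵥ S⁻¹ *ᵥ x1)
        ≤ a * b * ((t2 / t1) * q1 + (1 / (t2 / t1)) * q2) :=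
      mul_le_mul_of_nonneg_left hcross hab2
    have h4 : a ^ 2 * q1 + a * b * ((t2 / t1) * q1 + (1 / (t2 / t1)) * q2) + b ^ 2 * q2
        = a * (t / t1) * q1 + b * (t / t2) * q2 := by
      simp only [hts]; field_simp; ring
    linarith
  have key : gfun S αv μv t ≤ a * ((1 / t1) * q1) + b * ((1 / t2) * q2) := by
    rw [gfun_def]
    have h5 : sInf (qf S⁻¹ '' feas αv μv t) ≤ qf S⁻¹ (a • x1 + b • x2) :=
      sInf_le_feas hS.inv.posSemidef hxfeas
    have h6 : (1 / t) * sInf (qf S⁻¹ '' feas αv μv t)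
        ≤ (1 / t) * (a * (t / t1) * q1 + b * (t / t2) * q2) := by
      apply mul_le_mul_of_nonneg_left (le_trans h5 hqx) (by positivity)
    refine le_trans h6 (le_of_eq ?_)
    field_simp
  rw [gfun_def S αv μv t1, gfun_def S αv μv t2, hs1, hs2]
  exact key

end Stmt1Aux
namespace Stmt1Aux
open Matrix
variable {d : ℕ}

lemma gfun_lb {S : Matrix (Fin d) (Fin d) ℝ} {αv μv : Fin d → ℝ}
    (hα : ∀ i, 0 < αv i) (hμ : ∀ i, 0 < μv i) {c : ℝ} (hc : 0 < c)
    (hcoer : ∀ x : Fin d → ℝ, c * ‖x‖ ^ 2 ≤ qf S⁻¹ x) (i0 : Fin d)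
    {t : ℝ} (ht : 0 < t) :
    c * αv i0 ^ 2 / t ≤ gfun S αv μv t ∧ c * μv i0 ^ 2 * t ≤ gfun S αv μv t := by
  have hb : 0 ≤ αv i0 + μv i0 * t :=
    add_nonneg (hα i0).le (mul_nonneg (hμ i0).le ht.le)
  have hsInf := sInf_lb (M := S) hcoer hc.le (αv := αv) (μv := μv) i0 hb
  have hg : (1 / t) * (c * (αv i0 + μv i0 * t) ^ 2) ≤ gfun S αv μv t := by
    rw [gfun_def]
    exact mul_le_mul_of_nonneg_left hsInf (by positivity)
  have hμt : 0 < μv i0 * t := mul_pos (hμ i0) ht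
  constructor
  · have h2 : c * αv i0 ^ 2 ≤ c * (αv i0 + μv i0 * t) ^ 2 := by
      nlinarith [mul_pos (hα i0) hμt, sq_nonneg (μv i0 * t), hc]
    have h3 : c * αv i0 ^ 2 / t = (1 / t) * (c * αv i0 ^ 2) := by ring
    rw [h3]
    exact le_trans (mul_le_mul_of_nonneg_left h2 (by positivity)) hg
  · have h2 : c * (μv i0 * t) ^ 2 ≤ c * (αv i0 + μv i0 * t) ^ 2 := by
      nlinarith [mul_pos (hα i0) hμt, sq_nonneg (αv i0), hc]
    have h3 : c * μv i0 ^ 2 * t = (1 / t) * (c * (μv i0 * t) ^ 2) := by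
      field_simp
    rw [h3]
    exact le_trans (mul_le_mul_of_nonneg_left h2 (by positivity)) hg

lemma gfun_nonneg {S : Matrix (Fin d) (Fin d) ℝ} (hS : S.PosDef) (αv μv : Fin d → ℝ)
    {t : ℝ} (ht : 0 < t) : 0 ≤ gfun S αv μv t := by
  rw [gfun_def]
  have h1 : 0 ≤ sInf (qf S⁻¹ '' feas αv μv t) := by
    refine le_csInf (img_nonempty S αv μv t) fun v hv => ?_
    obtain ⟨x, -, rfl⟩ := hv
    exact qf_nonneg hS.inv.posSemidef x
  positivity

lemma gfun_exists_min {S : Matrix (Fin d) (Fin d) ℝ} (hS : S.PosDef) (hd : 0 < d)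
    {αv μv : Fin d → ℝ} (hα : ∀ i, 0 < αv i) (hμ : ∀ i, 0 < μv i) :
    ∃ t₀ : ℝ, 0 < t₀ ∧ ∀ t : ℝ, 0 < t → gfun S αv μv t₀ ≤ gfun S αv μv t := by
  obtain ⟨c, hc, hcoer⟩ := coercive hS.inv hd
  set i0 : Fin d := ⟨0, hd⟩
  set m := gfun S αv μv 1 with hm
  have hm0 : 0 ≤ m := gfun_nonneg hS αv μv one_pos
  have hα0 := hα i0
  have hμ0 := hμ i0
  set A := min 1 (c * αv i0 ^ 2 / (m + 1)) with hA
  set B := max 1 ((m + 1) / (c * μv i0 ^ 2)) with hB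
  have hApos : 0 < A := lt_min one_pos (by positivity)
  have hA1 : A ≤ 1 := min_le_left _ _
  have hB1 : 1 ≤ B := le_max_left _ _
  have hsub : Set.Icc A B ⊆ Set.Ioi (0:ℝ) := fun x hx => lt_of_lt_of_le hApos hx.1
  have hcont : ContinuousOn (gfun S αv μv) (Set.Icc A B) :=
    ((gfun_convex hS hd αv μv).continuousOn isOpen_Ioi).mono hsub
  have h1mem : (1:ℝ) ∈ Set.Icc A B := ⟨hA1, hB1⟩
  obtain ⟨t₀, ht₀mem, ht₀min⟩ := isCompact_Icc.exists_isMinOn ⟨1, h1mem⟩ hcont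
  have ht₀pos : 0 < t₀ := hsub ht₀mem
  refine ⟨t₀, ht₀pos, fun t ht => ?_⟩
  by_cases hmem : t ∈ Set.Icc A B
  · exact ht₀min hmem
  · have hle1 : gfun S αv μv t₀ ≤ m := ht₀min h1mem
    rw [Set.mem_Icc, not_and_or] at hmem
    rcases hmem with h | h
    · push_neg at h
      have hlb := (gfun_lb hα hμ hc hcoer i0 ht).1
      have key : m + 1 ≤ c * αv i0 ^ 2 / t := by
        have hA2 : A ≤ c * αv i0 ^ 2 / (m + 1) := min_le_right _ _
        have ht' : t < c * αv i0 ^ 2 / (m + 1) := lt_of_lt_of_le h hA2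
        rw [le_div_iff₀ ht]
        rw [lt_div_iff₀ (by positivity : (0:ℝ) < m + 1)] at ht'
        linarith
      linarith
    · push_neg at h
      have hlb := (gfun_lb hα hμ hc hcoer i0 ht).2
      have key : m + 1 ≤ c * μv i0 ^ 2 * t := by
        have hB2 : (m + 1) / (c * μv i0 ^ 2) ≤ B := le_max_right _ _
        have ht' : (m + 1) / (c * μv i0 ^ 2) < t := lt_of_le_of_lt hB2 h
        rw [div_lt_iff₀ (by positivity : (0:ℝ) < c * μv i0 ^ 2)] at ht'
        linarith
      linarith

lemma gfun_min_unique {S : Matrix (Fin d) (Fin d) ℝ} (hS : S.PosDef) (hd : 0 < d)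
    {αv μv : Fin d → ℝ} (hα : ∀ i, 0 < αv i) (hμ : ∀ i, 0 < μv i)
    {t₀ t₁ : ℝ} (h₀ : 0 < t₀ ∧ ∀ t : ℝ, 0 < t → gfun S αv μv t₀ ≤ gfun S αv μv t)
    (h₁ : 0 < t₁ ∧ ∀ t : ℝ, 0 < t → gfun S αv μv t₁ ≤ gfun S αv μv t) : t₀ = t₁ := by
  obtain ⟨ht₀, hmin₀⟩ := h₀
  obtain ⟨ht₁, hmin₁⟩ := h₁
  set m := gfun S αv μv t₀ with hm
  have hm1 : gfun S αv μv t₁ = m := le_antisymm (hmin₁ t₀ ht₀) (hmin₀ t₁ ht₁)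
  obtain ⟨c, hc, hcoer⟩ := coercive hS.inv hd
  have hmpos : 0 < m := by
    have h1 := (gfun_lb hα hμ hc hcoer (⟨0, hd⟩ : Fin d) ht₀).1
    have h2 : 0 < c * αv (⟨0, hd⟩ : Fin d) ^ 2 / t₀ := by
      have := hα (⟨0, hd⟩ : Fin d); positivity
    linarith
  set tb := (t₀ + t₁) / 2 with htb
  have htbpos : 0 < tb := by positivity
  have hconv := (gfun_convex hS hd αv μv).2 (Set.mem_Ioi.mpr ht₀) (Set.mem_Ioi.mpr ht₁)
    (by norm_num : (0:ℝ) ≤ 1/2) (by norm_num : (0:ℝ) ≤ 1/2) (by norm_num)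
  have htbeq : (1/2 : ℝ) • t₀ + (1/2 : ℝ) • t₁ = tb := by
    simp [smul_eq_mul, htb]; ring
  rw [htbeq, hm1, ← hm] at hconv
  simp only [smul_eq_mul] at hconv
  have hgtb : gfun S αv μv tb = m := le_antisymm (by linarith) (hmin₀ tb htbpos)
  -- QP minimizers
  obtain ⟨x₀, hx₀f, hs₀, -⟩ := exists_qp_min hS hd αv μv t₀
  obtain ⟨x₁, hx₁f, hs₁, -⟩ := exists_qp_min hS hd αv μv t₁
  have hq₀ : qf S⁻¹ x₀ = t₀ * m := by
    have h : m = (1 / t₀) * qf S⁻¹ x₀ := by rw [hm, gfun_def, hs₀]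
    have h2 : t₀ * m = t₀ * ((1 / t₀) * qf S⁻¹ x₀) := by rw [← h]
    rw [← mul_assoc, mul_one_div, div_self (ne_of_gt ht₀), one_mul] at h2
    linarith
  have hq₁ : qf S⁻¹ x₁ = t₁ * m := by
    have h : m = (1 / t₁) * qf S⁻¹ x₁ := by rw [← hm1, gfun_def, hs₁]
    have h2 : t₁ * m = t₁ * ((1 / t₁) * qf S⁻¹ x₁) := by rw [← h]
    rw [← mul_assoc, mul_one_div, div_self (ne_of_gt ht₁), one_mul] at h2
    linarith
  have hmidf : (1/2 : ℝ) • x₀ + (1/2 : ℝ) • x₁ ∈ feas αv μv tb := by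
    intro i
    have h1 := hx₀f i
    have h2 := hx₁f i
    simp only [Pi.add_apply, Pi.smul_apply, smul_eq_mul]
    have : αv i + μv i * tb = (1/2)*(αv i + μv i * t₀) + (1/2)*(αv i + μv i * t₁) := by
      rw [htb]; ring
    linarith
  have hstb : sInf (qf S⁻¹ '' feas αv μv tb) = tb * m := by
    have h : m = (1 / tb) * sInf (qf S⁻¹ '' feas αv μv tb) := by rw [← hgtb, gfun_def]
    have h2 : tb * m = tb * ((1 / tb) * sInf (qf S⁻¹ '' feas αv μv tb)) := by rw [← h]
    rw [← mul_assoc, mul_one_div, div_self (ne_of_gt htbpos), one_mul] at h2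
    linarith
  have hub : tb * m ≤ qf S⁻¹ ((1/2 : ℝ) • x₀ + (1/2 : ℝ) • x₁) := by
    rw [← hstb]; exact sInf_le_feas hS.inv.posSemidef hmidf
  have e1 := qf_smul_add S⁻¹ (1/2) (1/2) x₀ x₁
  have e2 := qf_smul_add S⁻¹ (1/2) (-(1/2)) x₀ x₁
  set v := (1/2 : ℝ) • x₀ + (-(1/2) : ℝ) • x₁ with hv
  have hvle : qf S⁻¹ v ≤ 0 := by
    rw [hv, e2]
    rw [e1] at hub
    rw [hq₀, hq₁] at *
    nlinarith [hub]
  have hv0 : v = 0 := qf_eq_zero hS.inv hvle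
  have hx01 : x₀ = x₁ := by
    funext i
    have := congrFun hv0 i
    simp only [hv, Pi.add_apply, Pi.smul_apply, smul_eq_mul, Pi.zero_apply] at this
    linarith
  have : t₀ * m = t₁ * m := by rw [← hq₀, ← hq₁, hx01]
  have := mul_right_cancel₀ (ne_of_gt hmpos) this
  exact this

end Stmt1Aux
namespace Stmt1Aux
open Matrix
variable {d : ℕ}

lemma ess_repr {S : Matrix (Fin d) (Fin d) ℝ} (hS : S.PosDef)
    {b btil : Fin d → ℝ} {I : Finset (Fin d)}
    (hbI : ∀ i ∈ I, btil i = b i)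
    (hrow : ∀ j, j ∉ I → btil j = rowdot S I b j) :
    S⁻¹ *ᵥ btil = ext0 I (wvec S I b) ∧
    qf S⁻¹ btil = subQF S I b ∧
    (∀ v : Fin d → ℝ, v ⬝ᵥ S⁻¹ *ᵥ btil = ∑ i : ↥I, wvec S I b i * v i) := by
  set w := wvec S I b with hw
  have hIdet : IsUnit (_root_.sub S I I).det := (posDef_sub hS I).det_pos.ne'.isUnit
  have hSdet : IsUnit S.det := hS.det_pos.ne'.isUnit
  have step2 : ∀ j (hj : j ∈ I), rowdot S I b j = b j := by
    intro j hj
    have h1 : rowdot S I b j = (_root_.sub S I I *ᵥ w) ⟨j, hj⟩ := rfl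
    rw [h1, hw, wvec, mulVec_mulVec, Matrix.mul_nonsing_inv _ hIdet, one_mulVec]
    rfl
  have step3 : S *ᵥ ext0 I w = btil := by
    funext j
    rw [mulVec_ext0]
    by_cases hj : j ∈ I
    · rw [show (∑ i : ↥I, S j i * w i) = rowdot S I b j from rfl, step2 j hj, hbI j hj]
    · rw [show (∑ i : ↥I, S j i * w i) = rowdot S I b j from rfl, ← hrow j hj]
  have step4 : S⁻¹ *ᵥ btil = ext0 I w := by
    rw [← step3, mulVec_mulVec, Matrix.nonsing_inv_mul _ hSdet, one_mulVec]
  refine ⟨step4, ?_, ?_⟩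
  · rw [qf, step4, dotProduct_comm, dotProduct_ext0]
    rw [subQF, dotProduct]
    refine (Finset.sum_congr rfl fun i _ => ?_).symm
    rw [hbI i i.2]
    exact mul_comm _ _
  · intro v
    rw [step4, dotProduct_comm, dotProduct_ext0]

lemma ess_char {S : Matrix (Fin d) (Fin d) ℝ} (hS : S.PosDef) (hd : 0 < d)
    {αv μv : Fin d → ℝ} (hα : ∀ i, 0 < αv i) (hμ : ∀ i, 0 < μv i)
    {t₀ : ℝ} (ht₀ : 0 < t₀)
    (hmin : ∀ t : ℝ, 0 < t → gfun S αv μv t₀ ≤ gfun S αv μv t)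
    {btil : Fin d → ℝ} {I : Finset (Fin d)}
    (hM : Minimizes S (fun i => αv i + μv i * t₀) btil)
    (hE : EssIdx S (fun i => αv i + μv i * t₀) btil I) :
    t₀ = Real.sqrt (subQF S I αv / subQF S I μv) ∧
    gfun S αv μv t₀ = (1 / t₀) * subQF S I (fun i => αv i + μv i * t₀) := by
  set b : Fin d → ℝ := fun i => αv i + μv i * t₀ with hb
  obtain ⟨hInem, hbI, -, -, hrow, -⟩ := hE
  obtain ⟨hrepr, hqf, hcrossgen⟩ := ess_repr hS hbI hrow
  set w := wvec S I b with hw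
  set Q := subQF S I b with hQ
  -- value of g at t₀
  have hbtilfeas : btil ∈ feas αv μv t₀ := fun i => hM.1 i
  have hsInf : sInf (qf S⁻¹ '' feas αv μv t₀) = qf S⁻¹ btil :=
    sInf_eq_of_min hbtilfeas hM.2
  have hgt₀ : gfun S αv μv t₀ = (1 / t₀) * Q := by
    rw [gfun_def, hsInf, hqf]
  refine ⟨?_, hgt₀⟩
  -- constants
  set B' : ℝ := ∑ i : ↥I, w i * μv i with hB'
  set E : ℝ := qf S⁻¹ μv with hE'
  have hμne : μv ≠ 0 := by
    intro h
    have := hμ ⟨0, hd⟩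
    rw [h] at this
    exact lt_irrefl 0 this
  have hEpos : 0 < E := qf_pos hS.inv hμne
  -- cross term
  have hcross : ∀ s : ℝ, qf S⁻¹ (btil + s • μv) = Q + 2 * s * B' + s ^ 2 * E := by
    intro s
    rw [qf_add, hqf]
    have h1 : btil ⬝ᵥ S⁻¹ *ᵥ (s • μv) = s * (btil ⬝ᵥ S⁻¹ *ᵥ μv) := by
      simp [mulVec_smul]
    have h2 : (s • μv) ⬝ᵥ S⁻¹ *ᵥ btil = s * (μv ⬝ᵥ S⁻¹ *ᵥ btil) := by
      simp [smul_dotProduct]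
    have h3 : μv ⬝ᵥ S⁻¹ *ᵥ btil = B' := hcrossgen μv
    have h4 : btil ⬝ᵥ S⁻¹ *ᵥ μv = B' := by
      rw [dot_symm hS.inv.isHermitian btil μv, h3]
    rw [h1, h2, h3, h4, qf_smul]
    ring
  -- key inequality from minimality
  have key : ∀ t : ℝ, 0 < t →
      Q * t ≤ (Q + 2 * (t - t₀) * B' + (t - t₀) ^ 2 * E) * t₀ := by
    intro t ht
    have hfeas : btil + (t - t₀) • μv ∈ feas αv μv t := by
      intro i
      have h1 : αv i + μv i * t₀ ≤ btil i := hM.1 i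
      simp only [Pi.add_apply, Pi.smul_apply, smul_eq_mul]
      nlinarith [h1]
    have h2 : gfun S αv μv t ≤ (1 / t) * (Q + 2 * (t - t₀) * B' + (t - t₀) ^ 2 * E) := by
      rw [gfun_def]
      refine mul_le_mul_of_nonneg_left ?_ (by positivity)
      rw [← hcross (t - t₀)]
      exact sInf_le_feas hS.inv.posSemidef hfeas
    have h3 : (1 / t₀) * Q ≤ (1 / t) * (Q + 2 * (t - t₀) * B' + (t - t₀) ^ 2 * E) := by
      rw [← hgt₀]; exact le_trans (hmin t ht) h2
    rw [one_div_mul_eq_div, one_div_mul_eq_div, div_le_div_iff₀ ht₀ ht] at h3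
    exact h3
  -- stationarity: Q = 2 t₀ B'
  have hstat : Q = 2 * t₀ * B' := by
    by_contra hne
    set k : ℝ := 2 * t₀ * B' - Q with hk
    have hkne : k ≠ 0 := fun h => hne (by rw [hk] at h; linarith)
    rcases lt_or_gt_of_ne hkne with hklt | hkgt
    · -- k < 0 : take t slightly above t₀
      set δ : ℝ := min t₀ (-k / (2 * t₀ * E)) with hδ
      have hδpos : 0 < δ := lt_min ht₀ (by
        apply div_pos (by linarith) (by positivity))
      have hδle : δ ≤ -k / (2 * t₀ * E) := min_le_right _ _
      have h1 := key (t₀ + δ) (by linarith)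
      have h2 : 2 * (t₀ * E) * δ ≤ -k := by
        rw [le_div_iff₀ (by positivity : (0:ℝ) < 2 * t₀ * E)] at hδle
        nlinarith [hδle]
      nlinarith [h1, h2, hδpos, mul_pos hδpos (neg_pos.mpr hklt),
        mul_le_mul_of_nonneg_left h2 hδpos.le]
    · -- k > 0 : take t slightly below t₀
      set δ : ℝ := min (t₀ / 2) (k / (2 * t₀ * E)) with hδ
      have hδpos : 0 < δ := lt_min (by linarith) (by positivity)
      have hδle : δ ≤ k / (2 * t₀ * E) := min_le_right _ _
      have hδlt : δ ≤ t₀ / 2 := min_le_left _ _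
      have h1 := key (t₀ - δ) (by linarith)
      have h2 : 2 * (t₀ * E) * δ ≤ k := by
        rw [le_div_iff₀ (by positivity : (0:ℝ) < 2 * t₀ * E)] at hδle
        nlinarith [hδle]
      nlinarith [h1, h2, hδpos, mul_pos hδpos hkgt,
        mul_le_mul_of_nonneg_left h2 hδpos.le]
  -- split Q and B'
  set wα := wvec S I αv with hwα
  set wμ := wvec S I μv with hwμ
  have hsubv : subv b I = subv αv I + t₀ • subv μv I := by
    funext i
    simp only [subv, Pi.add_apply, Pi.smul_apply, smul_eq_mul, hb]
    ring
  have hwsplit : w = wα + t₀ • wμ := by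
    rw [hw, hwα, hwμ, wvec, wvec, wvec, hsubv, mulVec_add, mulVec_smul]
  set A : ℝ := subQF S I αv with hA
  set B : ℝ := subQF S I μv with hBB
  set C : ℝ := subv αv I ⬝ᵥ wμ with hC
  have hsym : subv μv I ⬝ᵥ wα = C := by
    rw [hC, hwα, hwμ, wvec, wvec]
    exact dot_symm (posDef_sub hS I).inv.isHermitian (subv μv I) (subv αv I)
  have hA' : (∑ i : ↥I, w i * αv i) = A + t₀ * C := by
    have h1 : (∑ i : ↥I, w i * αv i) = subv αv I ⬝ᵥ w := by
      rw [dotProduct]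
      exact Finset.sum_congr rfl fun i _ => (mul_comm _ _)
    rw [h1, hwsplit, dotProduct_add, dotProduct_smul, smul_eq_mul, hA, subQF, hC]
  have hB'split : B' = C + t₀ * B := by
    have h1 : B' = subv μv I ⬝ᵥ w := by
      rw [hB', dotProduct]
      exact Finset.sum_congr rfl fun i _ => (mul_comm _ _)
    rw [h1, hwsplit, dotProduct_add, dotProduct_smul, smul_eq_mul, hsym, hBB, subQF]
  have hQsplit : Q = (∑ i : ↥I, w i * αv i) + t₀ * B' := by
    rw [hQ, subQF, dotProduct, hB', Finset.mul_sum, ← Finset.sum_add_distrib]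
    refine Finset.sum_congr rfl fun i _ => ?_
    show (αv i + μv i * t₀) * w i = w i * αv i + t₀ * (w i * μv i)
    ring
  -- A = t₀^2 B
  have hAB : A = t₀ ^ 2 * B := by
    have h1 : (∑ i : ↥I, w i * αv i) = t₀ * B' := by linarith [hstat, hQsplit]
    rw [hA'] at h1
    rw [hB'split] at h1
    nlinarith [h1]
  -- B > 0
  have hBpos : 0 < B := by
    haveI : Nonempty ↥I := ⟨⟨hInem.choose, hInem.choose_spec⟩⟩
    have hμIne : subv μv I ≠ 0 := by
      intro h
      obtain ⟨i, hi⟩ := hInem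
      have := congrFun h ⟨i, hi⟩
      simp only [subv, Pi.zero_apply] at this
      exact absurd this (ne_of_gt (hμ i))
    have := (posDef_sub hS I).inv.dotProduct_mulVec_pos hμIne
    simpa [hBB, subQF, wvec] using this
  -- conclude
  have hdiv : A / B = t₀ ^ 2 := by
    rw [hAB, mul_div_assoc, div_self (ne_of_gt hBpos), mul_one]
  rw [hdiv, Real.sqrt_sq ht₀.le]
end Stmt1Aux


/-- Lemma 2.2 of Dȩbicki–Hashorva–Ji–Tabiś 2018:
for `Σ` positive definite and `α, μ` with positive components, the function
`g(t) = (1/t)·inf_{x ≥ α+μt} xᵀΣ⁻¹x` is convex on `(0,∞)` and attains its unique minimum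
over `(0,∞)` at some `t₀ > 0`; if `I` is the essential index set of `P_Σ(α + μ t₀)`, then
`t₀ = sqrt((α_IᵀΣ_{II}⁻¹α_I)/(μ_IᵀΣ_{II}⁻¹μ_I))` and
`inf g = g(t₀) = (1/t₀)·b_IᵀΣ_{II}⁻¹b_I` with `b = α + μ t₀`. -/
theorem stmt_1 {d : ℕ} (hd : 2 ≤ d) (S : Matrix (Fin d) (Fin d) ℝ) (hS : S.PosDef)
    (αv μv : Fin d → ℝ) (hα : ∀ i, 0 < αv i) (hμ : ∀ i, 0 < μv i) :
    ConvexOn ℝ (Set.Ioi (0 : ℝ)) (gfun S αv μv) ∧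
    (∃! t₀ : ℝ, 0 < t₀ ∧ ∀ t : ℝ, 0 < t → gfun S αv μv t₀ ≤ gfun S αv μv t) ∧
    ∀ t₀ : ℝ, (0 < t₀ ∧ ∀ t : ℝ, 0 < t → gfun S αv μv t₀ ≤ gfun S αv μv t) →
      ∀ btil : Fin d → ℝ, ∀ I : Finset (Fin d),
        Minimizes S (fun i => αv i + μv i * t₀) btil →
        EssIdx S (fun i => αv i + μv i * t₀) btil I →
          t₀ = Real.sqrt (subQF S I αv / subQF S I μv) ∧
          gfun S αv μv t₀ = (1 / t₀) * subQF S I (fun i => αv i + μv i * t₀) := by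
  have hd0 : 0 < d := by omega
  refine ⟨Stmt1Aux.gfun_convex hS hd0 αv μv, ?_, ?_⟩
  · obtain ⟨t₀, h⟩ := Stmt1Aux.gfun_exists_min hS hd0 hα hμ
    exact ⟨t₀, h, fun t₁ h₁ => Stmt1Aux.gfun_min_unique hS hd0 hα hμ h₁ h⟩
  · intro t₀ h btil I hMin hEss
    exact Stmt1Aux.ess_char hS hd0 hα hμ h.1 h.2 hMin hEss
end
end

section
/- For every fixed T > 0, the function r ↦ H_I(r,T) is continuous on the open interval (0,T). -/
open MeasureTheory ProbabilityTheory Filter Asymptotics Matrix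
open scoped ENNReal NNReal

noncomputable section

variable {Ω : Type*} [MeasureSpace Ω]

set_option linter.unusedSectionVars false
set_option linter.unusedVariables false

open Set Topology

section AuxLemmas

lemma lintegral_exp_mul_gaussianReal (c : ℝ) (v : ℝ≥0) :
    ∫⁻ y, ENNReal.ofReal (Real.exp (c * y)) ∂(gaussianReal 0 v)
      = ENNReal.ofReal (Real.exp (c ^ 2 * v / 2)) := by
  rcases eq_or_ne v 0 with hv | hv
  · subst hv
    rw [gaussianReal_zero_var, lintegral_dirac' _ (by fun_prop)]
    simp
  · have hv' : (0 : ℝ) < (v : ℝ) := NNReal.coe_pos.2 (pos_iff_ne_zero.2 hv)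
    rw [gaussianReal_of_var_ne_zero _ hv,
      lintegral_withDensity_eq_lintegral_mul _ (measurable_gaussianPDF _ _) (by fun_prop)]
    have key : ∀ y : ℝ, (gaussianPDF 0 v * fun y => ENNReal.ofReal (Real.exp (c * y))) y
        = ENNReal.ofReal (Real.exp (c ^ 2 * v / 2)) * gaussianPDF (c * v) v y := by
      intro y
      simp only [Pi.mul_apply, gaussianPDF]
      rw [← ENNReal.ofReal_mul (gaussianPDFReal_nonneg _ _ _),
        ← ENNReal.ofReal_mul (Real.exp_pos _).le]
      congr 1
      simp only [gaussianPDFReal]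
      rw [mul_assoc, ← Real.exp_add, mul_left_comm, ← Real.exp_add]
      congr 2
      field_simp
      ring
    simp_rw [key]
    rw [lintegral_const_mul _ (measurable_gaussianPDF _ _), lintegral_gaussianPDF_eq_one _ hv,
      mul_one]

/-- A measurable set in `ι → ℝ` containing no two points strictly comparable
componentwise is Lebesgue-null. -/
lemma volume_eq_zero_of_strict_antichain {ι : Type*} [Fintype ι] [Nonempty ι]
    {S : Set (ι → ℝ)} (hSm : MeasurableSet S)
    (h : ∀ x ∈ S, ∀ y ∈ S, ¬ ∀ i, x i < y i) : volume S = 0 := by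
  classical
  have key : ∀ n : ℕ, volume (S ∩ Set.pi Set.univ fun _ : ι => Icc (-(n : ℝ)) n) = 0 := by
    intro n
    set Sn := S ∩ Set.pi Set.univ fun _ : ι => Icc (-(n : ℝ)) n with hSn
    have hSnm : MeasurableSet Sn :=
      hSm.inter (MeasurableSet.univ_pi fun _ => measurableSet_Icc)
    by_contra h0
    -- translate `Sn` by `(1/(k+1)) • 1`
    set v : ℕ → (ι → ℝ) := fun k => fun _ => 1 / ((k : ℝ) + 1) with hv
    set U : ℕ → Set (ι → ℝ) := fun k => (fun x => v k + x) ⁻¹' Sn with hU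
    have hvpos : ∀ k : ℕ, 0 < 1 / ((k : ℝ) + 1) := fun k => by positivity
    have hUm : ∀ k, MeasurableSet (U k) := fun k =>
      hSnm.preimage (measurable_const.add measurable_id)
    have hUvol : ∀ k, volume (U k) = volume Sn := fun k =>
      measure_preimage_add volume (v k) Sn
    have hdisj : Pairwise (Function.onFun Disjoint U) := by
      intro k l hkl
      refine Set.disjoint_left.2 fun x hk hl => ?_
      have h1 : v k + x ∈ S := hk.1
      have h2 : v l + x ∈ S := hl.1
      rcases hkl.lt_or_gt with hc | hc
      · have hc' : 1 / ((l : ℝ) + 1) < 1 / ((k : ℝ) + 1) := by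
          apply one_div_lt_one_div_of_lt (by positivity)
          exact_mod_cast by omega
        exact h _ h2 _ h1 fun i => by simpa [hv] using hc'
      · have hc' : 1 / ((k : ℝ) + 1) < 1 / ((l : ℝ) + 1) := by
          apply one_div_lt_one_div_of_lt (by positivity)
          exact_mod_cast by omega
        exact h _ h1 _ h2 fun i => by simpa [hv] using hc'
    have hsub : ∀ k, U k ⊆ Set.pi Set.univ fun _ : ι => Icc (-(n : ℝ) - 1) n := by
      intro k x hx i _
      have h2 := hx.2 i (Set.mem_univ i)
      have hk1 : 1 / ((k : ℝ) + 1) ≤ 1 := by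
        rw [div_le_one (by positivity)]; linarith [Nat.cast_nonneg (α := ℝ) k]
      simp only [Set.mem_Icc] at h2 ⊢
      constructor
      · have := h2.1
        simp only [hv, Pi.add_apply] at this ⊢
        linarith [hvpos k]
      · have := h2.2
        simp only [hv, Pi.add_apply] at this ⊢
        linarith [hvpos k]
    have hle : ∑' k : ℕ, volume (U k) ≤ volume (Set.pi Set.univ fun _ : ι => Icc (-(n : ℝ) - 1) n) := by
      rw [← measure_iUnion hdisj hUm]
      exact measure_mono (Set.iUnion_subset hsub)
    have hfin : volume (Set.pi Set.univ fun _ : ι => Icc (-(n : ℝ) - 1) n) ≠ ∞ := by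
      rw [volume_pi_pi]
      exact ENNReal.prod_ne_top fun i _ => by simp [Real.volume_Icc]
    rw [tsum_congr hUvol, ENNReal.tsum_const_eq_top_of_ne_zero h0] at hle
    exact hfin (top_le_iff.1 hle)
  have hcover : S ⊆ ⋃ n : ℕ, S ∩ Set.pi Set.univ fun _ : ι => Icc (-(n : ℝ)) n := by
    intro x hx
    obtain ⟨M, hM⟩ := Finset.exists_le (Finset.univ.image fun i => |x i|)
    obtain ⟨n, hn⟩ := exists_nat_ge M
    refine Set.mem_iUnion.2 ⟨n, hx, fun i _ => ?_⟩
    have hxi : |x i| ≤ M := hM _ (Finset.mem_image_of_mem _ (Finset.mem_univ i))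
    have := abs_le.1 (hxi.trans hn)
    simpa using this
  exact measure_mono_null hcover (by simpa using fun n => key n)

lemma exists_Ioo_crossing {ι : Type*} [Fintype ι] {f : ℝ → ι → ℝ} (hf : ∀ i, Continuous fun t => f t i)
    {x y : ι → ℝ} (hxy : ∀ i, x i < y i) {u v : ℝ} (huv : u ≤ v)
    (hu : ∀ i, y i ≤ f u i) (hv : ∃ i, f v i ≤ x i) :
    ∃ a b, u ≤ a ∧ a < b ∧ b ≤ v ∧
      ∀ t ∈ Set.Ioo a b, (∀ i, x i < f t i) ∧ (∃ i, f t i < y i) := by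
  classical
  set C : Set ℝ := {t | t ∈ Icc u v ∧ ∀ i, y i ≤ f t i} with hC
  have hCclosed : IsClosed C := by
    have : C = Icc u v ∩ ⋂ i, {t | y i ≤ f t i} := by
      ext t; simp [hC, Set.mem_iInter]
    rw [this]
    exact isClosed_Icc.inter (isClosed_iInter fun i => isClosed_le continuous_const (hf i))
  have hCne : C.Nonempty := ⟨u, ⟨le_rfl, huv⟩, hu⟩
  have hCbdd : BddAbove C := ⟨v, fun t ht => ht.1.2⟩
  set τ := sSup C with hτ
  have hτC : τ ∈ C := hCclosed.csSup_mem hCne hCbdd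
  have hτv : τ < v := by
    refine lt_of_le_of_ne hτC.1.2 fun he => ?_
    obtain ⟨i, hi⟩ := hv
    exact absurd (hτC.2 i) (by rw [he]; exact not_le.2 (hi.trans_lt (hxy i)))
  set D : Set ℝ := {t | t ∈ Icc τ v ∧ ∃ i, f t i ≤ x i} with hD
  have hDclosed : IsClosed D := by
    have : D = Icc τ v ∩ ⋃ i, {t | f t i ≤ x i} := by
      ext t; simp [hD, Set.mem_iUnion]
    rw [this]
    exact isClosed_Icc.inter (isClosed_iUnion_of_finite fun i =>
      isClosed_le (hf i) continuous_const)
  have hDne : D.Nonempty := ⟨v, ⟨hτv.le, le_rfl⟩, hv⟩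
  have hDbdd : BddBelow D := ⟨τ, fun t ht => ht.1.1⟩
  set σ := sInf D with hσ
  have hσD : σ ∈ D := hDclosed.csInf_mem hDne hDbdd
  have hτD : τ ∉ D := by
    rintro ⟨-, i, hi⟩
    exact absurd (hτC.2 i) (not_le.2 (hi.trans_lt (hxy i)))
  have hτσ : τ < σ := lt_of_le_of_ne hσD.1.1 (fun he => hτD (by rw [he]; exact hσD))
  refine ⟨τ, σ, hτC.1.1, hτσ, hσD.1.2, fun t ht => ⟨?_, ?_⟩⟩
  · -- t < σ = sInf D, τ ≤ t : t ∉ D, and t ∈ Icc τ v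
    have htD : t ∉ D := fun hmem => absurd (csInf_le hDbdd hmem) (not_le.2 ht.2)
    have htIcc : t ∈ Icc τ v := ⟨ht.1.le, ht.2.le.trans hσD.1.2⟩
    intro i
    by_contra hcon
    exact htD ⟨htIcc, i, not_lt.1 hcon⟩
  · -- t > τ = sSup C : t ∉ C, and t ∈ Icc u v
    have htC : t ∉ C := fun hmem => absurd (le_csSup hCbdd hmem) (not_le.2 ht.1)
    have htIcc : t ∈ Icc u v := ⟨hτC.1.1.trans ht.1.le, ht.2.le.trans hσD.1.2⟩
    by_contra hcon
    push_neg at hcon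
    exact htC ⟨htIcc, hcon⟩

lemma sojourn_no_strict_pair {ι : Type*} [Fintype ι] {f : ℝ → ι → ℝ}
    (hf : ∀ i, Continuous fun t => f t i) {T r : ℝ} (hr0 : 0 < r) (hrT : r < T)
    {x y : ι → ℝ} (hxy : ∀ i, x i < y i)
    (hx : volume {t : ℝ | 0 ≤ t ∧ t ≤ T ∧ ∀ i, x i < f t i} = ENNReal.ofReal r)
    (hy : volume {t : ℝ | 0 ≤ t ∧ t ≤ T ∧ ∀ i, y i < f t i} = ENNReal.ofReal r) : False := by
  classical
  set Ax := {t : ℝ | 0 ≤ t ∧ t ≤ T ∧ ∀ i, x i < f t i} with hAx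
  set Ay := {t : ℝ | 0 ≤ t ∧ t ≤ T ∧ ∀ i, y i < f t i} with hAy
  have hAym : MeasurableSet Ay := by
    have : Ay = Icc 0 T ∩ ⋂ i, {t | y i < f t i} := by
      ext t; simp [hAy, Set.mem_iInter, Set.mem_Icc]; tauto
    rw [this]
    exact measurableSet_Icc.inter (MeasurableSet.iInter fun i =>
      measurableSet_lt measurable_const (hf i).measurable)
  -- Ay is nonempty
  have hAyne : Ay.Nonempty := by
    rcases Ay.eq_empty_or_nonempty with he | hne
    · rw [he, measure_empty] at hy
      exact absurd (ENNReal.ofReal_eq_zero.1 hy.symm) (not_le.2 hr0)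
    · exact hne
  obtain ⟨s₁, hs₁⟩ := hAyne
  -- there is a point of [0, T] outside Ax
  have hs₂ : ∃ s₂ ∈ Icc (0:ℝ) T, ∃ i, f s₂ i ≤ x i := by
    by_contra hcon
    push_neg at hcon
    have hsub : Icc (0:ℝ) T ⊆ Ax := fun t ht => ⟨ht.1, ht.2, fun i => hcon t ht i⟩
    have hle2 : volume (Icc (0:ℝ) T) ≤ volume Ax := measure_mono hsub
    rw [hx, Real.volume_Icc, sub_zero] at hle2
    exact absurd hle2 (not_le.2 (ENNReal.ofReal_lt_ofReal_iff (hr0.trans hrT)|>.2 hrT))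
  obtain ⟨s₂, hs₂Icc, hs₂i⟩ := hs₂
  -- find an interval contained in Ax \ Ay
  have main : ∃ a b : ℝ, 0 ≤ a ∧ a < b ∧ b ≤ T ∧
      ∀ t ∈ Set.Ioo a b, (∀ i, x i < f t i) ∧ (∃ i, f t i < y i) := by
    rcases le_total s₁ s₂ with hc | hc
    · obtain ⟨a, b, h1, h2, h3, h4⟩ := exists_Ioo_crossing hf hxy hc
        (fun i => (hs₁.2.2 i).le) hs₂i
      exact ⟨a, b, hs₁.1.trans h1, h2, h3.trans hs₂Icc.2, h4⟩
    · set g : ℝ → ι → ℝ := fun t => f (s₂ + s₁ - t) with hg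
      have hgc : ∀ i, Continuous fun t => g t i := fun i =>
        (hf i).comp (by continuity)
      have hgu : ∀ i, y i ≤ g s₂ i := by
        intro i; simp only [hg]
        rw [show s₂ + s₁ - s₂ = s₁ by ring]
        exact (hs₁.2.2 i).le
      have hgv : ∃ i, g s₁ i ≤ x i := by
        obtain ⟨i, hi⟩ := hs₂i
        exact ⟨i, by simpa [hg, show s₂ + s₁ - s₁ = s₂ by ring] using hi⟩
      obtain ⟨a, b, h1, h2, h3, h4⟩ := exists_Ioo_crossing hgc hxy hc hgu hgv
      refine ⟨s₂ + s₁ - b, s₂ + s₁ - a, ?_, by linarith, ?_, fun t ht => ?_⟩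
      · linarith [hs₂Icc.1, hs₁.1]
      · linarith [hs₁.2.1, hs₂Icc.2]
      · have : s₂ + s₁ - t ∈ Set.Ioo a b := ⟨by linarith [ht.2], by linarith [ht.1]⟩
        have h5 := h4 _ this
        simpa [hg, show s₂ + s₁ - (s₂ + s₁ - t) = t by ring] using h5
  obtain ⟨a, b, ha0, hab, hbT, hint⟩ := main
  have hsub : Ay ∪ Set.Ioo a b ⊆ Ax := by
    rintro t (ht | ht)
    · exact ⟨ht.1, ht.2.1, fun i => (hxy i).trans (ht.2.2 i)⟩
    · exact ⟨ha0.trans ht.1.le, ht.2.le.trans hbT, (hint t ht).1⟩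
  have hdisj : Disjoint Ay (Set.Ioo a b) := by
    refine Set.disjoint_left.2 fun t ht ht' => ?_
    obtain ⟨i, hi⟩ := (hint t ht').2
    exact absurd (ht.2.2 i) (not_lt.2 hi.le)
  have hge : volume (Ay ∪ Set.Ioo a b) ≤ volume Ax := measure_mono hsub
  rw [measure_union hdisj measurableSet_Ioo, hx, hy, Real.volume_Ioo] at hge
  have : ENNReal.ofReal r < ENNReal.ofReal r + ENNReal.ofReal (b - a) :=
    ENNReal.lt_add_right ENNReal.ofReal_ne_top
      (fun hz => absurd (ENNReal.ofReal_eq_zero.1 hz) (not_le.2 (by linarith)))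
  exact absurd (this.trans_le hge) (lt_irrefl _)

lemma lintegral_exp_sum_indep {Ω : Type*} [MeasureSpace Ω]
    [IsProbabilityMeasure (volume : Measure Ω)] {n : ℕ} {Y : Fin n → Ω → ℝ}
    (hmeas : ∀ j, Measurable (Y j))
    (hind : iIndepFun Y volume) (s : Finset (Fin n)) :
    ∫⁻ ω, ENNReal.ofReal (Real.exp (∑ j ∈ s, Y j ω))
      = ∏ j ∈ s, ∫⁻ ω, ENNReal.ofReal (Real.exp (Y j ω)) := by
  classical
  induction s using Finset.induction_on with
  | empty => simp
  | @insert a s ha ih =>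
    have hsum : ∀ ω, (∑ j ∈ insert a s, Y j ω) = Y a ω + ∑ j ∈ s, Y j ω := fun ω => by
      rw [Finset.sum_insert ha]
    simp_rw [hsum, Real.exp_add,
      ENNReal.ofReal_mul (Real.exp_pos _).le]
    rw [Finset.prod_insert ha, ← ih]
    have hindep : IndepFun (fun ω => ENNReal.ofReal (Real.exp (Y a ω)))
        (fun ω => ENNReal.ofReal (Real.exp (∑ j ∈ s, Y j ω))) volume := by
      have h1 : IndepFun (Y a) (∑ j ∈ s, Y j) volume :=
        (hind.indepFun_finset_sum_of_notMem hmeas ha).symm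
      have h2 := h1.comp (φ := fun z : ℝ => ENNReal.ofReal (Real.exp z))
        (ψ := fun z : ℝ => ENNReal.ofReal (Real.exp z)) (by fun_prop) (by fun_prop)
      have : (fun ω => ENNReal.ofReal (Real.exp ((∑ j ∈ s, Y j) ω)))
          = fun ω => ENNReal.ofReal (Real.exp (∑ j ∈ s, Y j ω)) := by
        funext ω; simp [Finset.sum_apply]
      rwa [Function.comp_def, Function.comp_def, this] at h2
    exact lintegral_mul_eq_lintegral_mul_lintegral_of_indepFun
      (by fun_prop) (by fun_prop) hindep


end AuxLemmas

section Core

variable {Ω : Type*} [MeasureSpace Ω] [IsProbabilityMeasure (volume : Measure Ω)]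
variable {ι : Type*} [Fintype ι]

/-- The exponential weight. -/
def wgtZ (θ : ι → ℝ) (x : ι → ℝ) : ℝ≥0∞ := ENNReal.ofReal (Real.exp (∑ i, θ i * x i))

lemma wgtZ_meas (θ : ι → ℝ) : Measurable (wgtZ θ) := by
  apply ENNReal.measurable_ofReal.comp
  apply Continuous.measurable
  exact Real.continuous_exp.comp (continuous_finset_sum _ fun i _ =>
    continuous_const.mul (continuous_apply i))

/-- The weighted measure of the "orthant" `{x | x < c}` is an explicit product. -/
lemma wgtZ_orthant (θ : ι → ℝ) (hθ : ∀ i, 0 < θ i) (c : ι → ℝ) :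
    (volume.withDensity (wgtZ θ)) {x : ι → ℝ | ∀ i, x i < c i}
      = ENNReal.ofReal (∏ i, Real.exp (θ i * c i) / θ i) := by
  classical
  have hsm : MeasurableSet {x : ι → ℝ | ∀ i, x i < c i} := by
    have : {x : ι → ℝ | ∀ i, x i < c i} = Set.pi Set.univ fun i => Iio (c i) := by
      ext z; simp [Set.mem_pi]
    rw [this]
    exact MeasurableSet.univ_pi fun i => measurableSet_Iio
  rw [withDensity_apply _ hsm, ← lintegral_indicator hsm]
  set F : (ι → ℝ) → ℝ := fun x => ∏ i, (Set.Iio (c i)).indicator (fun y => Real.exp (θ i * y)) (x i)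
    with hF
  have hpt : ∀ x : ι → ℝ, Set.indicator {x : ι → ℝ | ∀ i, x i < c i} (wgtZ θ) x
      = ENNReal.ofReal (F x) := by
    intro x
    by_cases hall : ∀ i, x i < c i
    · rw [Set.indicator_of_mem (show x ∈ {x : ι → ℝ | ∀ i, x i < c i} from hall)]
      have : F x = ∏ i, Real.exp (θ i * x i) := by
        refine Finset.prod_congr rfl fun i _ => ?_
        exact Set.indicator_of_mem (show x i ∈ Set.Iio (c i) from hall i) _
      rw [this, ← Real.exp_sum]
      rfl
    · rw [Set.indicator_of_notMem (show x ∉ {x : ι → ℝ | ∀ i, x i < c i} from hall)]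
      push_neg at hall
      obtain ⟨i, hi⟩ := hall
      have : F x = 0 := Finset.prod_eq_zero (Finset.mem_univ i)
        (Set.indicator_of_notMem (by simpa using hi) _)
      rw [this, ENNReal.ofReal_zero]
  have hInt_i : ∀ i, Integrable ((Set.Iio (c i)).indicator fun y => Real.exp (θ i * y)) := by
    intro i
    rw [integrable_indicator_iff measurableSet_Iio]
    exact (integrableOn_exp_mul_Iic (hθ i) (c i)).mono_set Iio_subset_Iic_self
  have hFint : Integrable F := Integrable.fintype_prod (f := fun i =>
    (Set.Iio (c i)).indicator fun y => Real.exp (θ i * y)) hInt_i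
  have hFnn : 0 ≤ᵐ[volume] F := ae_of_all _ fun x => Finset.prod_nonneg fun i _ =>
    Set.indicator_nonneg (fun y _ => (Real.exp_pos _).le) _
  rw [lintegral_congr hpt, ← ofReal_integral_eq_lintegral_ofReal hFint hFnn, hF]
  beta_reduce
  rw [volume_pi, integral_fintype_prod_eq_prod (f := fun i =>
    (Set.Iio (c i)).indicator fun y => Real.exp (θ i * y))]
  congr 1
  refine Finset.prod_congr rfl fun i _ => ?_
  rw [integral_indicator measurableSet_Iio,
    setIntegral_congr_set Iio_ae_eq_Iic, integral_exp_mul_Iic (hθ i) (c i)]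

/-- Sojourn functional of a process `Z` above the level `p.1` on `[0,T]`. -/
def sojZ (Z : ℝ → Ω → ι → ℝ) (T : ℝ) (p : (ι → ℝ) × Ω) : ℝ≥0∞ :=
  volume {t : ℝ | 0 ≤ t ∧ t ≤ T ∧ ∀ i, p.1 i < Z t p.2 i}

/-- The weighted product measure. -/
def nuW (θ : ι → ℝ) : Measure ((ι → ℝ) × Ω) :=
  ((volume : Measure (ι → ℝ)).withDensity (wgtZ θ)).prod (volume : Measure Ω)

instance sfin_nuW {θ : ι → ℝ} : SFinite (nuW (Ω := Ω) θ) := by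
  unfold nuW; infer_instance

/-- The function whose continuity in `r` we study. -/
def GZ (Z : ℝ → Ω → ι → ℝ) (θ : ι → ℝ) (T r : ℝ) : ℝ≥0∞ :=
  nuW θ {p | ENNReal.ofReal r < sojZ Z T p}

variable {Z : ℝ → Ω → ι → ℝ} {T : ℝ}

lemma S0_meas (hZm : ∀ i, Measurable fun p : ℝ × Ω => Z p.1 p.2 i) (T : ℝ) :
    MeasurableSet {q : ((ι → ℝ) × Ω) × ℝ | 0 ≤ q.2 ∧ q.2 ≤ T ∧ ∀ i, q.1.1 i < Z q.2 q.1.2 i} := by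
  have heq : {q : ((ι → ℝ) × Ω) × ℝ | 0 ≤ q.2 ∧ q.2 ≤ T ∧ ∀ i, q.1.1 i < Z q.2 q.1.2 i}
      = {q : ((ι → ℝ) × Ω) × ℝ | 0 ≤ q.2} ∩ ({q | q.2 ≤ T} ∩
        ⋂ i, {q : ((ι → ℝ) × Ω) × ℝ | q.1.1 i < Z q.2 q.1.2 i}) := by
    ext q; simp only [Set.mem_setOf_eq, Set.mem_inter_iff, Set.mem_iInter]
  rw [heq]
  refine (measurableSet_le measurable_const measurable_snd).inter
    ((measurableSet_le measurable_snd measurable_const).inter (MeasurableSet.iInter fun i => ?_))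
  exact measurableSet_lt (by fun_prop)
    ((hZm i).comp (measurable_snd.prodMk measurable_fst.snd))

lemma sojZ_lintegral (hZm : ∀ i, Measurable fun p : ℝ × Ω => Z p.1 p.2 i) (p : (ι → ℝ) × Ω) :
    sojZ Z T p = ∫⁻ t : ℝ,
      Set.indicator {q : ((ι → ℝ) × Ω) × ℝ | 0 ≤ q.2 ∧ q.2 ≤ T ∧ ∀ i, q.1.1 i < Z q.2 q.1.2 i}
        (fun _ => (1 : ℝ≥0∞)) (p, t) := by
  have hsl : MeasurableSet {t : ℝ | 0 ≤ t ∧ t ≤ T ∧ ∀ i, p.1 i < Z t p.2 i} :=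
    (S0_meas hZm T).preimage (measurable_const.prodMk measurable_id)
  rw [sojZ, ← lintegral_indicator_one hsl]
  exact lintegral_congr fun t => rfl

lemma sojZ_meas (hZm : ∀ i, Measurable fun p : ℝ × Ω => Z p.1 p.2 i) :
    Measurable (sojZ Z (Ω := Ω) T) := by
  have : (sojZ Z (Ω := Ω) T) = fun p => ∫⁻ t : ℝ,
      Set.indicator {q : ((ι → ℝ) × Ω) × ℝ | 0 ≤ q.2 ∧ q.2 ≤ T ∧ ∀ i, q.1.1 i < Z q.2 q.1.2 i}
        (fun _ => (1 : ℝ≥0∞)) (p, t) := funext (sojZ_lintegral hZm)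
  rw [this]
  exact Measurable.lintegral_prod_right' (measurable_const.indicator (S0_meas hZm T))

lemma GZ_eq (hZm : ∀ i, Measurable fun p : ℝ × Ω => Z p.1 p.2 i) (θ : ι → ℝ) (r : ℝ) :
    ∫⁻ x : ι → ℝ, wgtZ θ x * (volume : Measure Ω) {ω | ENNReal.ofReal r < sojZ Z T (x, ω)}
      = GZ Z θ T r := by
  have hEm : MeasurableSet {p : (ι → ℝ) × Ω | ENNReal.ofReal r < sojZ Z T p} :=
    measurableSet_lt measurable_const (sojZ_meas hZm)
  rw [GZ, nuW, Measure.prod_apply hEm,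
    lintegral_withDensity_eq_lintegral_mul _ (wgtZ_meas θ) (measurable_measure_prodMk_left hEm)]
  rfl


lemma GZ_lt_top (hZm : ∀ i, Measurable fun p : ℝ × Ω => Z p.1 p.2 i)
    (θ : ι → ℝ) (hθ : ∀ i, 0 < θ i) (K : ℝ)
    (hK : ∀ t ∈ Set.Icc (0:ℝ) T,
      (∫⁻ ω, ENNReal.ofReal (Real.exp (∑ i, θ i * Z t ω i))) ≤ ENNReal.ofReal K)
    {r : ℝ} (hr : 0 < r) : GZ Z θ T r ≠ ∞ := by
  classical
  set S0 := {q : ((ι → ℝ) × Ω) × ℝ | 0 ≤ q.2 ∧ q.2 ≤ T ∧ ∀ i, q.1.1 i < Z q.2 q.1.2 i} with hS0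
  have hS0m : MeasurableSet S0 := S0_meas hZm T
  set J := ∫⁻ p, sojZ Z T p ∂(nuW θ) with hJdef
  -- the crucial finiteness bound on J
  have hsecm : ∀ t : ℝ, MeasurableSet {p : (ι → ℝ) × Ω | 0 ≤ t ∧ t ≤ T ∧ ∀ i, p.1 i < Z t p.2 i} :=
    fun t => hS0m.preimage (measurable_id.prodMk measurable_const)
  have hJ1 : J = ∫⁻ t : ℝ, nuW θ {p : (ι → ℝ) × Ω | 0 ≤ t ∧ t ≤ T ∧ ∀ i, p.1 i < Z t p.2 i} := by
    have hu : Measurable (Function.uncurry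
        fun (p : (ι → ℝ) × Ω) (t : ℝ) => S0.indicator (fun _ => (1:ℝ≥0∞)) (p, t)) := by
      exact measurable_const.indicator hS0m
    rw [hJdef, lintegral_congr (sojZ_lintegral hZm), lintegral_lintegral_swap hu.aemeasurable]
    exact lintegral_congr fun t => by
      rw [← lintegral_indicator_one (hsecm t)]; exact lintegral_congr fun p => rfl
  have hsec_bound : ∀ t : ℝ, nuW θ {p : (ι → ℝ) × Ω | 0 ≤ t ∧ t ≤ T ∧ ∀ i, p.1 i < Z t p.2 i}
      ≤ (Set.Icc (0:ℝ) T).indicator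
          (fun _ => ENNReal.ofReal (∏ i, (θ i)⁻¹) * ENNReal.ofReal K) t := by
    intro t
    by_cases ht : t ∈ Set.Icc (0:ℝ) T
    · rw [Set.indicator_of_mem ht]
      have hseteq : {p : (ι → ℝ) × Ω | 0 ≤ t ∧ t ≤ T ∧ ∀ i, p.1 i < Z t p.2 i}
          = {p : (ι → ℝ) × Ω | ∀ i, p.1 i < Z t p.2 i} := by
        ext p; simp [ht.1, ht.2]
      have hOm : MeasurableSet {p : (ι → ℝ) × Ω | ∀ i, p.1 i < Z t p.2 i} := by
        have : {p : (ι → ℝ) × Ω | ∀ i, p.1 i < Z t p.2 i}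
            = ⋂ i, {p : (ι → ℝ) × Ω | p.1 i < Z t p.2 i} := by
          ext p; simp [Set.mem_iInter]
        rw [this]
        refine MeasurableSet.iInter fun i => measurableSet_lt (by fun_prop) ?_
        exact (hZm i).comp (measurable_const.prodMk measurable_snd)
      rw [hseteq, nuW, Measure.prod_apply_symm hOm]
      have hsect : ∀ ω : Ω, (volume.withDensity (wgtZ θ))
          ((fun x : ι → ℝ => (x, ω)) ⁻¹' {p : (ι → ℝ) × Ω | ∀ i, p.1 i < Z t p.2 i})
          = ENNReal.ofReal (∏ i, (θ i)⁻¹) * ENNReal.ofReal (Real.exp (∑ i, θ i * Z t ω i)) := by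
        intro ω
        have h1 : ((fun x : ι → ℝ => (x, ω)) ⁻¹' {p : (ι → ℝ) × Ω | ∀ i, p.1 i < Z t p.2 i})
            = {x : ι → ℝ | ∀ i, x i < Z t ω i} := rfl
        rw [h1, wgtZ_orthant θ hθ]
        rw [← ENNReal.ofReal_mul (Finset.prod_nonneg fun i _ => inv_nonneg.2 (hθ i).le)]
        congr 1
        rw [Finset.prod_div_distrib, div_eq_mul_inv, mul_comm, Finset.prod_inv_distrib,
          Real.exp_sum]
      rw [lintegral_congr hsect,
        lintegral_const_mul' _ _ ENNReal.ofReal_ne_top]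
      exact mul_le_mul_right (hK t ht) _
    · rw [Set.indicator_of_notMem ht]
      have : {p : (ι → ℝ) × Ω | 0 ≤ t ∧ t ≤ T ∧ ∀ i, p.1 i < Z t p.2 i} = ∅ := by
        ext p
        simp only [Set.mem_setOf_eq, Set.mem_empty_iff_false, iff_false, not_and]
        intro h1 h2
        exact absurd (Set.mem_Icc.2 ⟨h1, h2⟩) ht
      simp [this]
  have hJfin : J ≠ ∞ := by
    have h5 : J ≤ ENNReal.ofReal (∏ i, (θ i)⁻¹) * ENNReal.ofReal K * ENNReal.ofReal T := by
      rw [hJ1]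
      calc ∫⁻ t : ℝ, nuW θ {p : (ι → ℝ) × Ω | 0 ≤ t ∧ t ≤ T ∧ ∀ i, p.1 i < Z t p.2 i}
          ≤ ∫⁻ t : ℝ, (Set.Icc (0:ℝ) T).indicator
              (fun _ => ENNReal.ofReal (∏ i, (θ i)⁻¹) * ENNReal.ofReal K) t :=
            lintegral_mono hsec_bound
        _ = ENNReal.ofReal (∏ i, (θ i)⁻¹) * ENNReal.ofReal K * volume (Set.Icc (0:ℝ) T) := by
            rw [lintegral_indicator_const measurableSet_Icc]
        _ = ENNReal.ofReal (∏ i, (θ i)⁻¹) * ENNReal.ofReal K * ENNReal.ofReal T := by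
            rw [Real.volume_Icc, sub_zero]
    exact ne_top_of_le_ne_top
      (ENNReal.mul_ne_top (ENNReal.mul_ne_top ENNReal.ofReal_ne_top ENNReal.ofReal_ne_top)
        ENNReal.ofReal_ne_top) h5
  -- Markov inequality
  intro htop
  have hle : ENNReal.ofReal r * nuW θ {p | ENNReal.ofReal r ≤ sojZ Z T p} ≤ J :=
    mul_meas_ge_le_lintegral₀ (sojZ_meas hZm).aemeasurable _
  have hsub : GZ Z θ T r ≤ nuW θ {p | ENNReal.ofReal r ≤ sojZ Z T p} :=
    measure_mono (Set.setOf_subset_setOf.2 fun p hp => le_of_lt hp)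
  have h6 : nuW θ {p | ENNReal.ofReal r ≤ sojZ Z T p} = ∞ := top_le_iff.1 (htop ▸ hsub)
  rw [h6, ENNReal.mul_top (by simp [ENNReal.ofReal_eq_zero, not_le, hr])] at hle
  exact hJfin (top_le_iff.1 hle)

lemma GZ_null [Nonempty ι] (hZc : ∀ (ω : Ω) (i : ι), Continuous fun t => Z t ω i)
    (hZm : ∀ i, Measurable fun p : ℝ × Ω => Z p.1 p.2 i) (θ : ι → ℝ)
    {r : ℝ} (hr : 0 < r) (hrT : r < T) :
    nuW θ {p : (ι → ℝ) × Ω | sojZ Z T p = ENNReal.ofReal r} = 0 := by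
  have hNm : MeasurableSet {p : (ι → ℝ) × Ω | sojZ Z T p = ENNReal.ofReal r} :=
    (sojZ_meas hZm) (measurableSet_singleton _)
  rw [nuW, Measure.prod_apply_symm hNm]
  have h0 : ∀ ω : Ω, (volume.withDensity (wgtZ θ))
      ((fun x : ι → ℝ => (x, ω)) ⁻¹' {p : (ι → ℝ) × Ω | sojZ Z T p = ENNReal.ofReal r}) = 0 := by
    intro ω
    refine withDensity_absolutelyContinuous volume (wgtZ θ) ?_
    refine volume_eq_zero_of_strict_antichain ?_ ?_
    · exact ((sojZ_meas hZm).comp (measurable_id.prodMk measurable_const))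
        (measurableSet_singleton _)
    · intro x hx y hy hlt
      exact sojourn_no_strict_pair (fun i => hZc ω i) hr hrT hlt hx hy
  rw [lintegral_congr h0, lintegral_zero]

theorem core_continuity [Nonempty ι] {Z : ℝ → Ω → ι → ℝ}
    (hZc : ∀ (ω : Ω) (i : ι), Continuous fun t => Z t ω i)
    (hZm : ∀ i, Measurable fun p : ℝ × Ω => Z p.1 p.2 i)
    (θ : ι → ℝ) (hθ : ∀ i, 0 < θ i) {T : ℝ} (hT : 0 < T) (K : ℝ)
    (hK : ∀ t ∈ Set.Icc (0:ℝ) T,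
      (∫⁻ ω, ENNReal.ofReal (Real.exp (∑ i, θ i * Z t ω i))) ≤ ENNReal.ofReal K) :
    ContinuousOn (fun r => (GZ Z θ T r).toReal) (Set.Ioo 0 T) := by
  intro r₀ hr₀
  have hanti : ∀ r r' : ℝ, r ≤ r' → GZ Z θ T r' ≤ GZ Z θ T r := fun r r' h =>
    measure_mono fun p hp => lt_of_le_of_lt (ENNReal.ofReal_le_ofReal h) hp
  have hfinhalf : GZ Z θ T (r₀ / 2) ≠ ∞ := GZ_lt_top hZm θ hθ K hK (half_pos hr₀.1)
  have hfin0 : GZ Z θ T r₀ ≠ ∞ :=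
    ne_top_of_le_ne_top hfinhalf (hanti _ _ (by linarith [hr₀.1]))
  have hEm : ∀ c : ℝ, MeasurableSet {p : (ι → ℝ) × Ω | ENNReal.ofReal c < sojZ Z T p} :=
    fun c => measurableSet_lt measurable_const (sojZ_meas hZm)
  -- right continuity along the sequence r₀ + 1/(n+1)
  have hrightsets : Monotone fun n : ℕ =>
      {p : (ι → ℝ) × Ω | ENNReal.ofReal (r₀ + 1 / ((n : ℝ) + 1)) < sojZ Z T p} := by
    intro n m hnm p hp
    refine lt_of_le_of_lt (ENNReal.ofReal_le_ofReal ?_) hp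
    have : 1 / ((m : ℝ) + 1) ≤ 1 / ((n : ℝ) + 1) :=
      one_div_le_one_div_of_le (by positivity) (by exact_mod_cast by omega)
    linarith
  have hrunion : (⋃ n : ℕ, {p : (ι → ℝ) × Ω | ENNReal.ofReal (r₀ + 1 / ((n : ℝ) + 1)) < sojZ Z T p})
      = {p : (ι → ℝ) × Ω | ENNReal.ofReal r₀ < sojZ Z T p} := by
    ext p
    simp only [Set.mem_iUnion, Set.mem_setOf_eq]
    constructor
    · rintro ⟨n, hn⟩
      refine lt_of_le_of_lt (ENNReal.ofReal_le_ofReal ?_) hn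
      have : (0:ℝ) < 1 / ((n : ℝ) + 1) := by positivity
      linarith
    · intro hp
      rcases eq_top_or_lt_top (sojZ Z T p) with htop | hlt
      · exact ⟨0, htop ▸ ENNReal.ofReal_lt_top⟩
      · have h2 : r₀ < (sojZ Z T p).toReal := by
          by_contra hcon
          push_neg at hcon
          have := ENNReal.ofReal_le_ofReal hcon
          rw [ENNReal.ofReal_toReal hlt.ne] at this
          exact absurd hp (not_lt.2 this)
        obtain ⟨n, hn⟩ := exists_nat_one_div_lt (show 0 < (sojZ Z T p).toReal - r₀ by linarith)
        refine ⟨n, ?_⟩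
        have h3 : r₀ + 1 / ((n : ℝ) + 1) < (sojZ Z T p).toReal := by linarith
        calc ENNReal.ofReal (r₀ + 1 / ((n : ℝ) + 1))
            < ENNReal.ofReal ((sojZ Z T p).toReal) :=
              (ENNReal.ofReal_lt_ofReal_iff (lt_trans hr₀.1 h2)).2 h3
          _ = sojZ Z T p := ENNReal.ofReal_toReal hlt.ne
  have hright : Tendsto (fun n : ℕ => GZ Z θ T (r₀ + 1 / ((n : ℝ) + 1))) atTop
      (𝓝 (GZ Z θ T r₀)) := by
    have h := tendsto_measure_iUnion_atTop (μ := nuW θ) hrightsets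
    rw [hrunion] at h
    exact h
  -- left continuity along the sequence r₀ - 1/(n+1)
  have hleftanti : Antitone fun n : ℕ =>
      {p : (ι → ℝ) × Ω | ENNReal.ofReal (r₀ - 1 / ((n : ℝ) + 1)) < sojZ Z T p} := by
    intro n m hnm p hp
    refine lt_of_le_of_lt (ENNReal.ofReal_le_ofReal ?_) hp
    have : 1 / ((m : ℝ) + 1) ≤ 1 / ((n : ℝ) + 1) :=
      one_div_le_one_div_of_le (by positivity) (by exact_mod_cast by omega)
    linarith
  have hleftinter : (⋂ n : ℕ,
      {p : (ι → ℝ) × Ω | ENNReal.ofReal (r₀ - 1 / ((n : ℝ) + 1)) < sojZ Z T p})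
      = {p : (ι → ℝ) × Ω | ENNReal.ofReal r₀ ≤ sojZ Z T p} := by
    ext p
    simp only [Set.mem_iInter, Set.mem_setOf_eq]
    constructor
    · intro hall
      by_contra hcon
      push_neg at hcon
      have hne : sojZ Z T p ≠ ∞ := fun h => by simp [h] at hcon
      have hs : (sojZ Z T p).toReal < r₀ := by
        by_contra hc2
        push_neg at hc2
        have := ENNReal.ofReal_le_ofReal hc2
        rw [ENNReal.ofReal_toReal hne] at this
        exact absurd hcon (not_lt.2 this)
      obtain ⟨n, hn⟩ := exists_nat_one_div_lt (show 0 < r₀ - (sojZ Z T p).toReal by linarith)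
      have h4 := hall n
      have h5 : (sojZ Z T p).toReal < r₀ - 1 / ((n : ℝ) + 1) := by linarith
      have h6 : sojZ Z T p ≤ ENNReal.ofReal (r₀ - 1 / ((n : ℝ) + 1)) := by
        rw [← ENNReal.ofReal_toReal hne]
        exact ENNReal.ofReal_le_ofReal h5.le
      exact absurd h4 (not_lt.2 h6)
    · intro hp n
      refine lt_of_lt_of_le ?_ hp
      apply (ENNReal.ofReal_lt_ofReal_iff hr₀.1).2
      have : (0:ℝ) < 1 / ((n : ℝ) + 1) := by positivity
      linarith
  have hNnull : nuW θ {p : (ι → ℝ) × Ω | sojZ Z T p = ENNReal.ofReal r₀} = 0 :=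
    GZ_null hZc hZm θ hr₀.1 hr₀.2
  have hEunion : nuW θ {p : (ι → ℝ) × Ω | ENNReal.ofReal r₀ ≤ sojZ Z T p} = GZ Z θ T r₀ := by
    apply le_antisymm
    · have hsplit : {p : (ι → ℝ) × Ω | ENNReal.ofReal r₀ ≤ sojZ Z T p}
          ⊆ {p : (ι → ℝ) × Ω | ENNReal.ofReal r₀ < sojZ Z T p}
            ∪ {p : (ι → ℝ) × Ω | sojZ Z T p = ENNReal.ofReal r₀} := by
        intro p hp
        have hp' : ENNReal.ofReal r₀ ≤ sojZ Z T p := hp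
        rcases lt_or_eq_of_le hp' with h | h
        · exact Or.inl h
        · exact Or.inr h.symm
      calc nuW θ {p : (ι → ℝ) × Ω | ENNReal.ofReal r₀ ≤ sojZ Z T p}
          ≤ nuW θ ({p : (ι → ℝ) × Ω | ENNReal.ofReal r₀ < sojZ Z T p}
            ∪ {p : (ι → ℝ) × Ω | sojZ Z T p = ENNReal.ofReal r₀}) := measure_mono hsplit
        _ ≤ GZ Z θ T r₀ + nuW θ {p : (ι → ℝ) × Ω | sojZ Z T p = ENNReal.ofReal r₀} :=
            measure_union_le _ _
        _ = GZ Z θ T r₀ := by rw [hNnull, add_zero]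
    · exact measure_mono (Set.setOf_subset_setOf.2 fun p hp => le_of_lt hp)
  have hleft : Tendsto (fun n : ℕ => GZ Z θ T (r₀ - 1 / ((n : ℝ) + 1))) atTop
      (𝓝 (GZ Z θ T r₀)) := by
    have hfinw : ∃ n : ℕ, nuW θ
        {p : (ι → ℝ) × Ω | ENNReal.ofReal (r₀ - 1 / ((n : ℝ) + 1)) < sojZ Z T p} ≠ ∞ := by
      obtain ⟨n, hn⟩ := exists_nat_one_div_lt (half_pos hr₀.1)
      exact ⟨n, ne_top_of_le_ne_top hfinhalf (hanti _ _ (by linarith))⟩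
    have h := tendsto_measure_iInter_atTop (μ := nuW θ)
      (fun n => (hEm _).nullMeasurableSet) hleftanti hfinw
    rw [hleftinter, hEunion] at h
    exact h
  -- combine
  have hGtendsto : Tendsto (fun r => GZ Z θ T r) (𝓝 r₀) (𝓝 (GZ Z θ T r₀)) := by
    refine tendsto_order.2 ⟨fun a ha => ?_, fun b hb => ?_⟩
    · obtain ⟨n, hn⟩ := (hright.eventually (eventually_gt_nhds ha)).exists
      have hmem : Set.Iio (r₀ + 1 / ((n : ℝ) + 1)) ∈ 𝓝 r₀ := by
        apply Iio_mem_nhds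
        have : (0:ℝ) < 1 / ((n : ℝ) + 1) := by positivity
        linarith
      filter_upwards [hmem] with r hr
      exact lt_of_lt_of_le hn (hanti r _ (le_of_lt hr))
    · obtain ⟨n, hn⟩ := (hleft.eventually (eventually_lt_nhds hb)).exists
      have hmem : Set.Ioi (r₀ - 1 / ((n : ℝ) + 1)) ∈ 𝓝 r₀ := by
        apply Ioi_mem_nhds
        have : (0:ℝ) < 1 / ((n : ℝ) + 1) := by positivity
        linarith
      filter_upwards [hmem] with r hr
      exact lt_of_le_of_lt (hanti _ r (le_of_lt hr)) hn
  have hca : ContinuousAt (fun r => (GZ Z θ T r).toReal) r₀ := by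
    exact (ENNReal.tendsto_toReal hfin0).comp hGtendsto
  exact hca.continuousWithinAt

end Core

/-- Step II of the proof of Lemma 5.2: for every fixed `T > 0`, the
function `r ↦ H_I(r,T)` is continuous on `(0,T)`. -/
theorem stmt_9 {Ω : Type*} [MeasureSpace Ω]
    [IsProbabilityMeasure (volume : Measure Ω)] {d : ℕ} (hd : 2 ≤ d)
    (B : ℝ → Ω → Fin d → ℝ) (hB : IsStdBMd d B)
    (A : Matrix (Fin d) (Fin d) ℝ) (hA : IsUnit A.det)
    (X : ℝ → Ω → Fin d → ℝ) (hX : ∀ t ω, X t ω = A.mulVec (B t ω))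
    (S : Matrix (Fin d) (Fin d) ℝ) (hS : S = A * A.transpose)
    (αv μv : Fin d → ℝ) (hα : ∀ i, 0 < αv i) (hμ : ∀ i, 0 < μv i)
    (t₀ : ℝ) (ht₀ : 0 < t₀)
    (hmin : ∀ t : ℝ, 0 < t → gfun S αv μv t₀ ≤ gfun S αv μv t)
    (huniq : ∀ t : ℝ, 0 < t → gfun S αv μv t = gfun S αv μv t₀ → t = t₀)
    (b : Fin d → ℝ) (hb : b = fun i => αv i + μv i * t₀)
    (btil : Fin d → ℝ) (hbtil : Minimizes S b btil)
    (I : Finset (Fin d)) (hI : EssIdx S b btil I)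
    (T : ℝ) (hT : 0 < T) :
    ContinuousOn (fun r => HIrT X μv S I b t₀ r T) (Set.Ioo 0 T) := by

  classical
  haveI : Nonempty ↥I := ⟨⟨hI.1.choose, hI.1.choose_spec⟩⟩
  set Z : ℝ → Ω → ↥I → ℝ := fun t ω i => X t ω ↑i - μv ↑i * t with hZdef
  set θ : ↥I → ℝ := fun i => wvec S I b i / t₀ with hθdef
  have hθpos : ∀ i, 0 < θ i := fun i => div_pos (hI.2.2.2.1 i) ht₀
  -- continuity of each coordinate of X
  have hXc : ∀ (ω : Ω) (j : Fin d), Continuous fun t => X t ω j := by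
    intro ω j
    have hXe : (fun t => X t ω j) = fun t => ∑ k, A j k * B t ω k := by
      funext t; rw [hX]; simp [Matrix.mulVec, dotProduct]
    rw [hXe]
    exact continuous_finset_sum _ fun k _ => continuous_const.mul ((hB.1 k).2.1 ω)
  have hZc : ∀ (ω : Ω) (i : ↥I), Continuous fun t => Z t ω i := fun ω i =>
    (hXc ω ↑i).sub (continuous_const.mul continuous_id)
  -- joint measurability
  have hBm : ∀ j : Fin d, Measurable fun p : ℝ × Ω => B p.1 p.2 j := fun j =>
    measurable_uncurry_of_continuous_of_measurable (u := fun t ω => B t ω j)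
      ((hB.1 j).2.1) ((hB.1 j).2.2.1)
  have hXm : ∀ j : Fin d, Measurable fun p : ℝ × Ω => X p.1 p.2 j := by
    intro j
    have hXe : (fun p : ℝ × Ω => X p.1 p.2 j) = fun p => ∑ k, A j k * B p.1 p.2 k := by
      funext p; rw [hX]; simp [Matrix.mulVec, dotProduct]
    rw [hXe]
    exact Finset.measurable_sum _ fun k _ => (hBm k).const_mul _
  have hZm : ∀ i : ↥I, Measurable fun p : ℝ × Ω => Z p.1 p.2 i := fun i =>
    (hXm ↑i).sub (measurable_fst.const_mul _)
  -- the exponential-moment bound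
  set c : Fin d → ℝ := fun j => ∑ i : ↥I, θ i * A (↑i) j with hcdef
  set K : ℝ := Real.exp (∑ j, c j ^ 2 * T / 2) with hKdef
  have hK : ∀ t ∈ Set.Icc (0:ℝ) T,
      (∫⁻ ω, ENNReal.ofReal (Real.exp (∑ i, θ i * Z t ω i))) ≤ ENNReal.ofReal K := by
    intro t ht
    have hsum : ∀ ω : Ω, ∑ i : ↥I, θ i * X t ω ↑i = ∑ j, c j * B t ω j := by
      intro ω
      simp only [hX, Matrix.mulVec, dotProduct, hcdef]
      simp_rw [Finset.mul_sum, Finset.sum_mul]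
      rw [Finset.sum_comm]
      exact Finset.sum_congr rfl fun j _ => Finset.sum_congr rfl fun i _ => by ring
    have hpt : ∀ ω : Ω, ENNReal.ofReal (Real.exp (∑ i, θ i * Z t ω i))
        ≤ ENNReal.ofReal (Real.exp (∑ j, c j * B t ω j)) := by
      intro ω
      apply ENNReal.ofReal_le_ofReal
      apply Real.exp_le_exp.2
      have he : ∑ i : ↥I, θ i * Z t ω i
          = (∑ j, c j * B t ω j) - (∑ i : ↥I, θ i * μv ↑i) * t := by
        rw [← hsum ω, Finset.sum_mul, ← Finset.sum_sub_distrib]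
        exact Finset.sum_congr rfl fun i _ => by simp only [hZdef]; ring
      rw [he]
      have hnn : 0 ≤ (∑ i : ↥I, θ i * μv ↑i) * t :=
        mul_nonneg (Finset.sum_nonneg fun i _ => mul_nonneg (hθpos i).le (hμ ↑i).le) ht.1
      linarith
    calc ∫⁻ ω, ENNReal.ofReal (Real.exp (∑ i, θ i * Z t ω i))
        ≤ ∫⁻ ω, ENNReal.ofReal (Real.exp (∑ j, c j * B t ω j)) := lintegral_mono hpt
      _ = ∏ j, ∫⁻ ω, ENNReal.ofReal (Real.exp (c j * B t ω j)) := by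
          exact lintegral_exp_sum_indep
            (fun j => ((hB.1 j).2.2.1 t).const_mul _)
            (hB.2.comp (fun j (g : ℝ → ℝ) => c j * g t)
              (fun j => (measurable_pi_apply t).const_mul _)) Finset.univ
      _ = ∏ j, ENNReal.ofReal (Real.exp (c j ^ 2 * t / 2)) := by
          refine Finset.prod_congr rfl fun j _ => ?_
          have hlaw : Measure.map (fun ω => B t ω j) volume
              = gaussianReal 0 (Real.toNNReal t) := by
            have h4 := (hB.1 j).2.2.2.1 0 t le_rfl ht.1
            have h5 : (fun ω => B t ω j - B 0 ω j) = fun ω => B t ω j := by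
              funext ω
              have h0 : B 0 ω j = 0 := (hB.1 j).1 ω
              rw [h0, sub_zero]
            rw [h5, sub_zero] at h4
            exact h4
          have h6 : ∫⁻ ω, ENNReal.ofReal (Real.exp (c j * B t ω j))
              = ∫⁻ y, ENNReal.ofReal (Real.exp (c j * y)) ∂(gaussianReal 0 (Real.toNNReal t)) := by
            rw [← hlaw, lintegral_map (f := fun y => ENNReal.ofReal (Real.exp (c j * y))) (by fun_prop) ((hB.1 j).2.2.1 t)]
          rw [h6, lintegral_exp_mul_gaussianReal, Real.coe_toNNReal _ ht.1]
      _ = ENNReal.ofReal (∏ j, Real.exp (c j ^ 2 * t / 2)) :=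
          (ENNReal.ofReal_prod_of_nonneg fun j _ => (Real.exp_pos _).le).symm
      _ ≤ ENNReal.ofReal K := by
          apply ENNReal.ofReal_le_ofReal
          rw [← Real.exp_sum, hKdef]
          apply Real.exp_le_exp.2
          apply Finset.sum_le_sum fun j _ => ?_
          have : c j ^ 2 * t ≤ c j ^ 2 * T := mul_le_mul_of_nonneg_left ht.2 (sq_nonneg _)
          linarith
  have key := core_continuity hZc hZm θ hθpos hT K hK
  have hfun : (fun r => HIrT X μv S I b t₀ r T) = fun r => (GZ Z θ T r).toReal := by
    funext r
    rw [HIrT]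
    congr 1
    rw [HIL, ← GZ_eq hZm θ r]
    apply lintegral_congr
    intro x
    have hw : ENNReal.ofReal (Real.exp ((1 / t₀) * (x ⬝ᵥ wvec S I b))) = wgtZ θ x := by
      rw [wgtZ]
      congr 1
      simp only [dotProduct, hθdef]
      rw [Finset.mul_sum]
      exact congrArg Real.exp (Finset.sum_congr rfl fun i _ => by ring)
    rw [hw]
    rfl
  rw [hfun]
  exact key
end
end

section
/- Let a, m > 0 and suppose one of the following holds: (C1) m < 1 and a < 1; (C2) m < 1, a ≥ 1 and m ≤ 1/a; (C3) m ≥ 1, a < 1 and m ≤ 1/a. Then: (R1) if −1 < ρ < (a+m)/2, g attains its unique minimum at t₀ = t₀⁽⁰⁾ = sqrt((1+a²−2aρ)/(1+m²−2mρ)), the essential index set of P_Σ(α̃+μ̃t₀) is I = {1,2}, the weakly essential set is K = ∅, inf g = g₀(t₀⁽⁰⁾), and g̃ = g₀''(t₀⁽⁰⁾). (R2) if ρ = (a+m)/2 (and ρ < 1), then t₀ = t₀⁽⁰⁾ = t₀⁽¹⁾ = 1, I = {1}, K = {2}, inf g = g₀(t₀⁽⁰⁾) = g₁(1) = 4, and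 g̃ = g₁''(1) = 2. (R3) if (a+m)/2 < ρ < 1, then t₀ = 1, I = {1}, K = ∅, inf g = 4, and g̃ = 2. -/
open MeasureTheory ProbabilityTheory Filter Asymptotics Matrix
open scoped ENNReal NNReal

noncomputable section

variable {Ω : Type*} [MeasureSpace Ω]

/-- `Σ = [[1, ρ],[ρ, 1]]`. -/
def S2 (ρ : ℝ) : Matrix (Fin 2) (Fin 2) ℝ := !![1, ρ; ρ, 1]

/-- `b(t) = α̃ + μ̃ t` for `α̃ = (1,a)`, `μ̃ = (1,m)`. -/
def bvec (a m t : ℝ) : Fin 2 → ℝ := fun i => ![1, a] i + ![1, m] i * t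

/-- `g₀(t) = (1/t)(α̃+μ̃t)ᵀΣ⁻¹(α̃+μ̃t)` written out explicitly. -/
def g0fun (ρ a m t : ℝ) : ℝ :=
  (1 + a ^ 2 - 2 * a * ρ) / ((1 - ρ ^ 2) * t) +
    2 * (1 + a * m - ρ * a - ρ * m) / (1 - ρ ^ 2) +
    (1 + m ^ 2 - 2 * ρ * m) * t / (1 - ρ ^ 2)

/-- `g₁(t) = (1+t)²/t`. -/
def g1fun (t : ℝ) : ℝ := (1 + t) ^ 2 / t

/-- `g₂(t) = (a+mt)²/t`. -/
def g2fun (a m t : ℝ) : ℝ := (a + m * t) ^ 2 / t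

/-- The weakly essential index set `K = {j ∈ Iᶜ : Σ_{jI}Σ_{II}⁻¹b_I = b_j}` (as a set). -/
def Kset (ρ : ℝ) (I : Finset (Fin 2)) (b : Fin 2 → ℝ) : Set (Fin 2) :=
  {j | j ∉ I ∧ rowdot (S2 ρ) I b j = b j}

/-! ### Auxiliary lemmas for Statement 12 -/

lemma S2_inv_eq (ρ : ℝ) (h1 : -1 < ρ) (h2 : ρ < 1) :
    (S2 ρ)⁻¹ = (1 - ρ^2)⁻¹ • !![1, -ρ; -ρ, 1] := by
  have hD : (1 : ℝ) - ρ^2 ≠ 0 := by nlinarith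
  apply Matrix.inv_eq_right_inv
  ext i j
  fin_cases i <;> fin_cases j <;>
    simp [S2, Matrix.mul_apply, Fin.sum_univ_two] <;> field_simp <;> ring

lemma qf_S2_inv (ρ : ℝ) (h1 : -1 < ρ) (h2 : ρ < 1) (x : Fin 2 → ℝ) :
    qf (S2 ρ)⁻¹ x = (x 0^2 - 2*ρ*(x 0)*(x 1) + (x 1)^2) / (1 - ρ^2) := by
  have hD : (1 : ℝ) - ρ^2 ≠ 0 := by nlinarith
  rw [S2_inv_eq ρ h1 h2]
  simp [qf, dotProduct, Matrix.mulVec, Fin.sum_univ_two]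
  field_simp
  ring

lemma mulVec_S2_inv (ρ : ℝ) (h1 : -1 < ρ) (h2 : ρ < 1) (b : Fin 2 → ℝ) :
    (S2 ρ)⁻¹.mulVec b = ![((b 0) - ρ*(b 1))/(1 - ρ^2), ((b 1) - ρ*(b 0))/(1 - ρ^2)] := by
  have hD : (1 : ℝ) - ρ^2 ≠ 0 := by nlinarith
  rw [S2_inv_eq ρ h1 h2]
  funext i
  fin_cases i <;>
    simp [Matrix.mulVec, dotProduct, Fin.sum_univ_two] <;> field_simp <;> ring

lemma stmt12_set_eq (a m t : ℝ) :
    {x : Fin 2 → ℝ | ∀ i, ![(1:ℝ), a] i + ![(1:ℝ), m] i * t ≤ x i}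
      = {x | 1 + t ≤ x 0 ∧ a + m * t ≤ x 1} := by
  ext x
  simp [Fin.forall_fin_two]

lemma gfun_eq (ρ a m t : ℝ) :
    gfun (S2 ρ) ![1, a] ![1, m] t
      = (1 / t) * sInf ((fun x => qf (S2 ρ)⁻¹ x) '' {x | 1 + t ≤ x 0 ∧ a + m * t ≤ x 1}) := by
  rw [gfun, stmt12_set_eq]

lemma qf_ge_A (ρ b0 b1 : ℝ) (hD : (0:ℝ) < 1 - ρ^2)
    (hw0 : 0 ≤ b0 - ρ*b1) (hw1 : 0 ≤ b1 - ρ*b0) (x0 x1 : ℝ) (hx0 : b0 ≤ x0) (hx1 : b1 ≤ x1) :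
    b0^2 - 2*ρ*b0*b1 + b1^2 ≤ x0^2 - 2*ρ*x0*x1 + x1^2 := by
  nlinarith [mul_nonneg (sub_nonneg.2 hx0) hw0, mul_nonneg (sub_nonneg.2 hx1) hw1,
    sq_nonneg ((x0 - b0) - ρ*(x1 - b1)), mul_nonneg hD.le (sq_nonneg (x1 - b1))]

lemma qf_ge_first (ρ : ℝ) (h1 : -1 < ρ) (h2 : ρ < 1) (c : ℝ) (x : Fin 2 → ℝ)
    (hc : 0 ≤ c) (hx : c ≤ x 0) : c^2 ≤ qf (S2 ρ)⁻¹ x := by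
  have hD : (0:ℝ) < 1 - ρ^2 := by nlinarith
  rw [qf_S2_inv ρ h1 h2, le_div_iff₀ hD]
  nlinarith [sq_nonneg (ρ*(x 0) - x 1), mul_nonneg (sub_nonneg.2 hx) (by linarith : (0:ℝ) ≤ x 0 + c), hD.le]

lemma isLeast_A (ρ b0 b1 : ℝ) (h1 : -1 < ρ) (h2 : ρ < 1)
    (hw0 : 0 ≤ b0 - ρ*b1) (hw1 : 0 ≤ b1 - ρ*b0) :
    IsLeast ((fun x => qf (S2 ρ)⁻¹ x) '' {x | b0 ≤ x 0 ∧ b1 ≤ x 1})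
      ((b0^2 - 2*ρ*b0*b1 + b1^2) / (1 - ρ^2)) := by
  have hD : (0:ℝ) < 1 - ρ^2 := by nlinarith
  constructor
  · refine ⟨![b0, b1], ⟨by simp, by simp⟩, ?_⟩
    show qf (S2 ρ)⁻¹ ![b0, b1] = _
    rw [qf_S2_inv ρ h1 h2]; simp
  · rintro y ⟨x, ⟨hx0, hx1⟩, rfl⟩
    show _ ≤ qf (S2 ρ)⁻¹ x
    rw [qf_S2_inv ρ h1 h2]
    exact div_le_div_of_nonneg_right (qf_ge_A ρ b0 b1 hD hw0 hw1 _ _ hx0 hx1) hD.le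

lemma isLeast_B (ρ b0 b1 : ℝ) (h1 : -1 < ρ) (h2 : ρ < 1) (hb0 : 0 < b0) (hb1 : b1 ≤ ρ*b0) :
    IsLeast ((fun x => qf (S2 ρ)⁻¹ x) '' {x | b0 ≤ x 0 ∧ b1 ≤ x 1}) (b0^2) := by
  have hD : (0:ℝ) < 1 - ρ^2 := by nlinarith
  constructor
  · refine ⟨![b0, ρ*b0], ⟨by simp, by simpa using hb1⟩, ?_⟩
    show qf (S2 ρ)⁻¹ ![b0, ρ*b0] = _
    rw [qf_S2_inv ρ h1 h2]; simp only [Matrix.cons_val_zero, Matrix.cons_val_one, Matrix.head_cons]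
    field_simp; ring
  · rintro y ⟨x, ⟨hx0, hx1⟩, rfl⟩
    exact qf_ge_first ρ h1 h2 b0 x hb0.le hx0

set_option maxHeartbeats 2000000 in
lemma stmt12_key (ρ a m t₀ t x0 x1 : ℝ) (h1 : -1 < ρ) (h2 : ρ < 1)
    (ht₀ : 0 < t₀) (ht : 0 < t)
    (hsq : t₀^2 * (1 + m^2 - 2*ρ*m) = 1 + a^2 - 2*a*ρ)
    (hw0 : 0 ≤ (1 + t₀) - ρ*(a + m*t₀)) (hw1 : 0 ≤ (a + m*t₀) - ρ*(1 + t₀))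
    (hx0 : 1 + t ≤ x0) (hx1 : a + m*t ≤ x1) :
    (((1 + t₀) - ρ*(a + m*t₀)) + m*((a + m*t₀) - ρ*(1 + t₀))) * (t₀ + t)^2
      ≤ (x0^2 - 2*ρ*x0*x1 + x1^2) * (2*t₀) := by
  set w0 := (1 + t₀) - ρ*(a + m*t₀) with hw0d
  set w1 := (a + m*t₀) - ρ*(1 + t₀) with hw1d
  set L := t₀ + t with hL
  have hident : 4*t₀^2*(x0^2 - 2*ρ*x0*x1 + x1^2) - 4*t₀*L*(w0*x0 + w1*x1)
      + L^2*((1 + t₀)*w0 + (a + m*t₀)*w1)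
      = ((2*t₀*x0 - L*(1 + t₀)) - ρ*(2*t₀*x1 - L*(a + m*t₀)))^2
        + (1 - ρ^2)*(2*t₀*x1 - L*(a + m*t₀))^2 := by
    rw [hw0d, hw1d, hL]; ring
  have hC : 4*t₀*L*(w0*(1 + t) + w1*(a + m*t)) - L^2*((1 + t₀)*w0 + (a + m*t₀)*w1)
      = 2*t₀*L^2*(w0 + m*w1) := by
    rw [hw0d, hw1d, hL]
    linear_combination ((t₀ + t)^2 - 4*t₀*(t₀ + t)) * hsq
  have hDpos : (0:ℝ) < 1 - ρ^2 := by nlinarith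
  have hLpos : 0 < L := by rw [hL]; linarith
  have hstep2 : w0*(1 + t) + w1*(a + m*t) ≤ w0*x0 + w1*x1 := by
    have := mul_le_mul_of_nonneg_left hx0 hw0
    have := mul_le_mul_of_nonneg_left hx1 hw1
    linarith
  nlinarith [sq_nonneg ((2*t₀*x0 - L*(1 + t₀)) - ρ*(2*t₀*x1 - L*(a + m*t₀))),
    mul_nonneg hDpos.le (sq_nonneg (2*t₀*x1 - L*(a + m*t₀))),
    mul_le_mul_of_nonneg_left hstep2 (by positivity : (0:ℝ) ≤ 4*t₀*L)]

lemma gfun_lb_R1 (ρ a m t₀ t : ℝ) (h1 : -1 < ρ) (h2 : ρ < 1)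
    (ht₀ : 0 < t₀) (ht : 0 < t)
    (hsq : t₀^2 * (1 + m^2 - 2*ρ*m) = 1 + a^2 - 2*a*ρ)
    (hw0 : 0 ≤ (1 + t₀) - ρ*(a + m*t₀)) (hw1 : 0 ≤ (a + m*t₀) - ρ*(1 + t₀)) :
    ((((1 + t₀) - ρ*(a + m*t₀)) + m*((a + m*t₀) - ρ*(1 + t₀))) * (t₀ + t)^2)
        / (2*t₀*(1 - ρ^2)*t)
      ≤ gfun (S2 ρ) ![1, a] ![1, m] t := by
  have hD : (0:ℝ) < 1 - ρ^2 := by nlinarith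
  rw [gfun_eq]
  set M' := ((1 + t₀) - ρ*(a + m*t₀)) + m*((a + m*t₀) - ρ*(1 + t₀)) with hM'
  have hlb : ∀ y ∈ (fun x => qf (S2 ρ)⁻¹ x) '' {x | 1 + t ≤ x 0 ∧ a + m * t ≤ x 1},
      M' * (t₀ + t)^2 / (2*t₀*(1 - ρ^2)) ≤ y := by
    rintro y ⟨x, ⟨hx0, hx1⟩, rfl⟩
    show _ ≤ qf (S2 ρ)⁻¹ x
    rw [qf_S2_inv ρ h1 h2, hM', div_le_div_iff₀ (by positivity) hD]
    have hk := mul_le_mul_of_nonneg_right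
      (stmt12_key ρ a m t₀ t (x 0) (x 1) h1 h2 ht₀ ht hsq hw0 hw1 hx0 hx1) hD.le
    nlinarith [hk]
  have hne : ((fun x => qf (S2 ρ)⁻¹ x) '' {x | 1 + t ≤ x 0 ∧ a + m * t ≤ x 1}).Nonempty :=
    ⟨qf (S2 ρ)⁻¹ ![1 + t, a + m*t], ⟨![1 + t, a + m*t], ⟨by simp, by simp⟩, rfl⟩⟩
  have hsinf := le_csInf hne hlb
  calc M' * (t₀ + t)^2 / (2*t₀*(1 - ρ^2)*t)
      = (1/t) * (M' * (t₀ + t)^2 / (2*t₀*(1 - ρ^2))) := by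
        rw [one_div, inv_mul_eq_div, div_div]
    _ ≤ _ := mul_le_mul_of_nonneg_left hsinf (by positivity)

lemma gfun_A_val (ρ a m t : ℝ) (h1 : -1 < ρ) (h2 : ρ < 1) (ht : 0 < t)
    (hw0 : 0 ≤ (1 + t) - ρ*(a + m*t)) (hw1 : 0 ≤ (a + m*t) - ρ*(1 + t)) :
    gfun (S2 ρ) ![1, a] ![1, m] t
      = ((1 + t)^2 - 2*ρ*(1 + t)*(a + m*t) + (a + m*t)^2) / ((1 - ρ^2)*t) := by
  rw [gfun_eq,
    (isLeast_A ρ (1 + t) (a + m*t) h1 h2 (by linarith) (by linarith)).csInf_eq]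
  rw [one_div, inv_mul_eq_div, div_div]

lemma gfun_B_lb (ρ a m t : ℝ) (h1 : -1 < ρ) (h2 : ρ < 1) (ha : 0 < a) (hm : 0 < m)
    (ht : 0 < t) : (1 + t)^2 / t ≤ gfun (S2 ρ) ![1, a] ![1, m] t := by
  rw [gfun_eq]
  have hlb : ∀ y ∈ (fun x => qf (S2 ρ)⁻¹ x) '' {x | 1 + t ≤ x 0 ∧ a + m * t ≤ x 1},
      (1 + t)^2 ≤ y := by
    rintro y ⟨x, ⟨hx0, hx1⟩, rfl⟩
    exact qf_ge_first ρ h1 h2 (1 + t) x (by linarith) hx0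
  have hne : ((fun x => qf (S2 ρ)⁻¹ x) '' {x | 1 + t ≤ x 0 ∧ a + m * t ≤ x 1}).Nonempty :=
    ⟨qf (S2 ρ)⁻¹ ![1 + t, a + m*t], ⟨![1 + t, a + m*t], ⟨by simp, by simp⟩, rfl⟩⟩
  have hsinf := le_csInf hne hlb
  calc (1 + t)^2 / t = (1/t) * (1 + t)^2 := by rw [one_div, inv_mul_eq_div]
    _ ≤ _ := mul_le_mul_of_nonneg_left hsinf (by positivity)

lemma gfun_B_val (ρ a m : ℝ) (h1 : -1 < ρ) (h2 : ρ < 1) (hab : a + m ≤ 2*ρ) :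
    gfun (S2 ρ) ![1, a] ![1, m] 1 = 4 := by
  rw [gfun_eq]
  have h := (isLeast_B ρ (1 + 1) (a + m*1) h1 h2 (by norm_num) (by linarith)).csInf_eq
  rw [h]
  norm_num

lemma g0fun_eq (ρ a m t : ℝ) (hD : (1:ℝ) - ρ^2 ≠ 0) (ht : t ≠ 0) :
    g0fun ρ a m t = ((1 + t)^2 - 2*ρ*(1 + t)*(a + m*t) + (a + m*t)^2) / ((1 - ρ^2)*t) := by
  simp only [g0fun]
  field_simp
  ring

lemma g0fun_lin (ρ a m t : ℝ) (hD : (1:ℝ) - ρ^2 ≠ 0) (ht : t ≠ 0) :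
    g0fun ρ a m t = ((1 + a^2 - 2*a*ρ)/(1 - ρ^2))/t + 2*(1 + a*m - ρ*a - ρ*m)/(1 - ρ^2)
      + ((1 + m^2 - 2*ρ*m)/(1 - ρ^2))*t := by
  simp only [g0fun]
  field_simp

lemma stmt12_Apos (ρ a : ℝ) (h1 : -1 < ρ) (h2 : ρ < 1) : 0 < 1 + a^2 - 2*a*ρ := by
  nlinarith [sq_nonneg (a - ρ)]

lemma stmt12_pos_factor {x c : ℝ} (hc : 0 < c) (h : 0 < x * c) : 0 < x := by
  by_contra h'
  push_neg at h'
  nlinarith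

lemma stmt12_t0_pos (ρ a m : ℝ) (h1 : -1 < ρ) (h2 : ρ < 1) :
    0 < Real.sqrt ((1 + a^2 - 2*a*ρ) / (1 + m^2 - 2*m*ρ)) :=
  Real.sqrt_pos.2 (div_pos (stmt12_Apos ρ a h1 h2) (stmt12_Apos ρ m h1 h2))

lemma stmt12_t0_sq (ρ a m : ℝ) (h1 : -1 < ρ) (h2 : ρ < 1) :
    (Real.sqrt ((1 + a^2 - 2*a*ρ) / (1 + m^2 - 2*m*ρ)))^2 * (1 + m^2 - 2*ρ*m)
      = 1 + a^2 - 2*a*ρ := by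
  have hC := stmt12_Apos ρ m h1 h2
  have hA := stmt12_Apos ρ a h1 h2
  rw [Real.sq_sqrt (le_of_lt (div_pos hA hC))]
  have h : 1 + m^2 - 2*ρ*m = 1 + m^2 - 2*m*ρ := by ring
  rw [h]
  exact div_mul_cancel₀ _ hC.ne'

lemma stmt12_w1_pos (ρ a m t₀ : ℝ) (h1 : -1 < ρ) (h2 : ρ < 1) (ha : 0 < a) (hm : 0 < m)
    (hρ : 2*ρ < a + m) (ht₀ : 0 < t₀)
    (hsq : t₀^2 * (1 + m^2 - 2*ρ*m) = 1 + a^2 - 2*a*ρ) :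
    0 < (a + m*t₀) - ρ*(1 + t₀) := by
  have hC : 0 < 1 + m^2 - 2*ρ*m := by nlinarith [sq_nonneg (m - ρ)]
  have hD : (0:ℝ) < 1 - ρ^2 := by nlinarith
  have key : 0 < (a - ρ) + t₀*(m - ρ) := by
    rcases lt_or_ge m ρ with hmρ | hmρ
    · have haρ : 0 < a - ρ := by linarith
      have hprod : ((a - ρ)^2 - (t₀*(ρ - m))^2) * (1 + m^2 - 2*ρ*m)
          = (1 - ρ^2) * ((a - m) * (a + m - 2*ρ)) := by
        linear_combination (-(ρ - m)^2) * hsq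
      have hgap : 0 < (1 - ρ^2) * ((a - m) * (a + m - 2*ρ)) :=
        mul_pos hD (mul_pos (by linarith) (by linarith))
      have hY := stmt12_pos_factor hC (by rw [hprod]; exact hgap)
      have hlt : (t₀*(ρ - m))^2 < (a - ρ)^2 := by linarith
      have := lt_of_pow_lt_pow_left₀ 2 haρ.le hlt
      linarith
    · rcases lt_or_ge a ρ with haρ | haρ
      · have hmρ' : 0 < m - ρ := by linarith
        have hprod : ((t₀*(m - ρ))^2 - (ρ - a)^2) * (1 + m^2 - 2*ρ*m)
            = (1 - ρ^2) * ((m - a) * (a + m - 2*ρ)) := by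
          linear_combination ((m - ρ)^2) * hsq
        have hgap : 0 < (1 - ρ^2) * ((m - a) * (a + m - 2*ρ)) :=
          mul_pos hD (mul_pos (by linarith) (by linarith))
        have hY := stmt12_pos_factor hC (by rw [hprod]; exact hgap)
        have hlt : (ρ - a)^2 < (t₀*(m - ρ))^2 := by linarith
        have := lt_of_pow_lt_pow_left₀ 2 (mul_nonneg ht₀.le hmρ'.le) hlt
        linarith
      · rcases lt_or_eq_of_le haρ with h | h
        · have : 0 ≤ t₀*(m - ρ) := mul_nonneg ht₀.le (by linarith)
          linarith
        · have hm' : 0 < m - ρ := by linarith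
          have : 0 < t₀*(m - ρ) := mul_pos ht₀ hm'
          linarith
  linarith

lemma stmt12_w0_pos (ρ a m t₀ : ℝ) (h1 : -1 < ρ) (h2 : ρ < 1) (ha : 0 < a) (hm : 0 < m)
    (hρ : 2*ρ < a + m) (ham : a*m ≤ 1) (ht₀ : 0 < t₀)
    (hsq : t₀^2 * (1 + m^2 - 2*ρ*m) = 1 + a^2 - 2*a*ρ) :
    0 < (1 + t₀) - ρ*(a + m*t₀) := by
  have hC : 0 < 1 + m^2 - 2*ρ*m := by nlinarith [sq_nonneg (m - ρ)]
  have hD : (0:ℝ) < 1 - ρ^2 := by nlinarith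
  have hsum : 0 < a + m - 2*ρ*(a*m) := by nlinarith
  have key : 0 < (1 - ρ*a) + t₀*(1 - ρ*m) := by
    rcases lt_or_ge (1 - ρ*a) 0 with hρa | hρa
    · have hρ0 : 0 < ρ := by nlinarith
      have ha1 : 1 < a := by nlinarith
      have hρm : ρ*m < 1 := by nlinarith
      have ham' : m < a := by nlinarith
      have hprod : ((t₀*(1 - ρ*m))^2 - (ρ*a - 1)^2) * (1 + m^2 - 2*ρ*m)
          = (1 - ρ^2) * ((a + m - 2*ρ*(a*m)) * (a - m)) := by
        linear_combination ((1 - ρ*m)^2) * hsq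
      have hgap : 0 < (1 - ρ^2) * ((a + m - 2*ρ*(a*m)) * (a - m)) :=
        mul_pos hD (mul_pos (by linarith) (by linarith))
      have hY := stmt12_pos_factor hC (by rw [hprod]; exact hgap)
      have hlt : (ρ*a - 1)^2 < (t₀*(1 - ρ*m))^2 := by linarith
      have := lt_of_pow_lt_pow_left₀ 2 (mul_nonneg ht₀.le (by linarith)) hlt
      linarith
    · rcases lt_or_ge (1 - ρ*m) 0 with hρm | hρm
      · have hρ0 : 0 < ρ := by nlinarith
        have hm1 : 1 < m := by nlinarith
        have h1a : 0 < 1 - ρ*a := by nlinarith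
        have ham' : a < m := by nlinarith
        have hprod : ((1 - ρ*a)^2 - (t₀*(ρ*m - 1))^2) * (1 + m^2 - 2*ρ*m)
            = (1 - ρ^2) * ((a + m - 2*ρ*(a*m)) * (m - a)) := by
          linear_combination (-(ρ*m - 1)^2) * hsq
        have hgap : 0 < (1 - ρ^2) * ((a + m - 2*ρ*(a*m)) * (m - a)) :=
          mul_pos hD (mul_pos (by linarith) (by linarith))
        have hY := stmt12_pos_factor hC (by rw [hprod]; exact hgap)
        have hlt : (t₀*(ρ*m - 1))^2 < (1 - ρ*a)^2 := by linarith
        have := lt_of_pow_lt_pow_left₀ 2 h1a.le hlt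
        linarith
      · rcases lt_or_eq_of_le hρa with h | h
        · have : 0 ≤ t₀*(1 - ρ*m) := mul_nonneg ht₀.le hρm
          linarith
        · have hmm : 0 < 1 - ρ*m := by
            rcases lt_or_eq_of_le hρm with h' | h'
            · linarith
            · exfalso; nlinarith
          have : 0 < t₀*(1 - ρ*m) := mul_pos ht₀ hmm
          linarith
  linarith

lemma stmt12_hasDeriv_aux (A B C t : ℝ) (ht : t ≠ 0) :
    HasDerivAt (fun s : ℝ => A/s + B + C*s) (-A/t^2 + C) t := by
  have hd1 : HasDerivAt (fun s : ℝ => A/s) (A * -(t^2)⁻¹) t := (hasDerivAt_inv ht).const_mul A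
  have hd2 : HasDerivAt (fun s : ℝ => C*s) (C * 1) t := (hasDerivAt_id t).const_mul C
  have := (hd1.add_const B).add hd2
  refine this.congr_deriv ?_
  field_simp

lemma stmt12_hasDeriv_aux2 (A C t : ℝ) (ht : t ≠ 0) :
    HasDerivAt (fun s : ℝ => -A/s^2 + C) (2*A/t^3) t := by
  have hsq : t^2 ≠ 0 := pow_ne_zero 2 ht
  have h0 : HasDerivAt (fun s : ℝ => s^2) (2*t) t := by
    simpa using hasDerivAt_pow 2 t
  have hd1 : HasDerivAt (fun s : ℝ => (s^2)⁻¹) (-(2*t)/(t^2)^2) t := h0.inv hsq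
  have hd2 := (hd1.const_mul (-A)).add_const C
  refine hd2.congr_deriv ?_
  field_simp

lemma stmt12_iteratedDeriv_two (f : ℝ → ℝ) (A B C x : ℝ) (hx : 0 < x)
    (hf : ∀ t : ℝ, 0 < t → f t = A/t + B + C*t) :
    iteratedDeriv 2 f x = 2*A/x^3 := by
  have hev : f =ᶠ[nhds x] fun s => A/s + B + C*s := by
    filter_upwards [eventually_gt_nhds hx] with t ht using hf t ht
  have hd1 : deriv f =ᶠ[nhds x] fun s => -A/s^2 + C := by
    refine hev.deriv.trans ?_
    filter_upwards [eventually_gt_nhds hx] with t ht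
    exact (stmt12_hasDeriv_aux A B C t ht.ne').deriv
  rw [iteratedDeriv_succ, iteratedDeriv_one, hd1.deriv_eq]
  exact (stmt12_hasDeriv_aux2 A C x hx.ne').deriv

instance : Unique ↥({0} : Finset (Fin 2)) :=
  ⟨⟨⟨0, by simp⟩⟩, by rintro ⟨a, ha⟩; simp only [Finset.mem_singleton] at ha; exact Subtype.ext ha⟩

lemma stmt12_sub_singleton (ρ : ℝ) : sub (S2 ρ) ({0} : Finset (Fin 2)) {0} = 1 := by
  ext i j
  have hi : i = default := Unique.eq_default i
  have hj : j = default := Unique.eq_default j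
  subst hi hj
  show S2 ρ 0 0 = (1 : Matrix _ _ ℝ) default default
  rw [Matrix.one_apply_eq]
  simp [S2]

lemma stmt12_wvec_singleton (ρ : ℝ) (b : Fin 2 → ℝ) (i : ↥({0} : Finset (Fin 2))) :
    wvec (S2 ρ) {0} b i = b 0 := by
  rw [wvec, stmt12_sub_singleton, inv_one, Matrix.one_mulVec]
  have : i = default := Unique.eq_default i
  subst this
  rfl

lemma stmt12_rowdot_singleton (ρ : ℝ) (b : Fin 2 → ℝ) (j : Fin 2) :
    rowdot (S2 ρ) ({0} : Finset (Fin 2)) b j = S2 ρ j 0 * b 0 := by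
  rw [rowdot, Fintype.sum_unique, stmt12_wvec_singleton]
  rfl

lemma stmt12_subQF_singleton (ρ : ℝ) (b : Fin 2 → ℝ) :
    subQF (S2 ρ) ({0} : Finset (Fin 2)) b = b 0 * b 0 := by
  rw [subQF, dotProduct, Fintype.sum_unique, stmt12_wvec_singleton]
  rfl

def stmt12_eU : ↥(Finset.univ : Finset (Fin 2)) ≃ Fin 2 :=
  Equiv.subtypeUnivEquiv (fun x => Finset.mem_univ x)

lemma stmt12_sub_univ (M : Matrix (Fin 2) (Fin 2) ℝ) :
    sub M (Finset.univ : Finset (Fin 2)) Finset.univ = M.submatrix stmt12_eU stmt12_eU := rfl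

lemma stmt12_wvec_univ (M : Matrix (Fin 2) (Fin 2) ℝ) (b : Fin 2 → ℝ)
    (i : ↥(Finset.univ : Finset (Fin 2))) :
    wvec M Finset.univ b i = M⁻¹.mulVec b (i : Fin 2) := by
  rw [wvec, stmt12_sub_univ, Matrix.inv_submatrix_equiv]
  rw [Matrix.mulVec, dotProduct]
  rw [Matrix.mulVec, dotProduct]
  exact Fintype.sum_equiv stmt12_eU _ _ (fun j => rfl)

lemma stmt12_subQF_univ (M : Matrix (Fin 2) (Fin 2) ℝ) (b : Fin 2 → ℝ) :
    subQF M Finset.univ b = b ⬝ᵥ M⁻¹.mulVec b := by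
  rw [subQF, dotProduct, dotProduct]
  refine Fintype.sum_equiv stmt12_eU _ _ (fun i => ?_)
  rw [stmt12_wvec_univ]
  rfl

lemma stmt12_B_branch (ρ a m : ℝ) (h1 : -1 < ρ) (h2 : ρ < 1) (ha : 0 < a) (hm : 0 < m)
    (hab : a + m ≤ 2*ρ) :
    (∀ t : ℝ, 0 < t → gfun (S2 ρ) ![1, a] ![1, m] 1 ≤ gfun (S2 ρ) ![1, a] ![1, m] t) ∧
    (∀ t : ℝ, 0 < t → gfun (S2 ρ) ![1, a] ![1, m] t = gfun (S2 ρ) ![1, a] ![1, m] 1 → t = 1) ∧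
    (∃ btil : Fin 2 → ℝ, Minimizes (S2 ρ) (bvec a m 1) btil ∧
      EssIdx (S2 ρ) (bvec a m 1) btil ({0} : Finset (Fin 2))) ∧
    gfun (S2 ρ) ![1, a] ![1, m] 1 = 4 := by
  have hD : (0:ℝ) < 1 - ρ^2 := by nlinarith
  have hval1 : gfun (S2 ρ) ![1, a] ![1, m] 1 = 4 := gfun_B_val ρ a m h1 h2 hab
  have hb0 : bvec a m 1 0 = 2 := by simp [bvec]; norm_num
  have hb1 : bvec a m 1 1 = a + m := by simp [bvec]
  refine ⟨?_, ?_, ?_, hval1⟩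
  · intro t ht
    have hlb := gfun_B_lb ρ a m t h1 h2 ha hm ht
    have h4 : 4 ≤ (1 + t)^2 / t := by
      rw [le_div_iff₀ ht]
      nlinarith [sq_nonneg (1 - t)]
    linarith
  · intro t ht heq
    have hlb := gfun_B_lb ρ a m t h1 h2 ha hm ht
    have h4 : (1 + t)^2 / t ≤ 4 := by rw [heq] at hlb; linarith
    rw [div_le_iff₀ ht] at h4
    have h5 : (1 - t)^2 ≤ 0 := by nlinarith
    have h6 : (1 - t)^2 = 0 := le_antisymm h5 (sq_nonneg _)
    have h7 : 1 - t = 0 := (pow_eq_zero_iff two_ne_zero).mp h6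
    linarith
  · refine ⟨![2, 2*ρ], ⟨?_, ?_⟩, ?_, ?_, ?_, ?_, ?_, ?_⟩
    · intro i
      fin_cases i
      · show bvec a m 1 0 ≤ ![(2:ℝ), 2*ρ] 0
        rw [hb0]
        norm_num
      · show bvec a m 1 1 ≤ ![(2:ℝ), 2*ρ] 1
        rw [hb1]
        show a + m ≤ 2*ρ
        linarith
    · intro y hy
      have hy0 : (2:ℝ) ≤ y 0 := by rw [← hb0]; exact hy 0
      have hq : qf (S2 ρ)⁻¹ ![2, 2*ρ] = 4 := by
        rw [qf_S2_inv ρ h1 h2]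
        simp only [Matrix.cons_val_zero, Matrix.cons_val_one, Matrix.head_cons]
        field_simp
        ring
      rw [hq]
      have := qf_ge_first ρ h1 h2 2 y (by norm_num) hy0
      norm_num at this
      exact this
    · exact ⟨0, Finset.mem_singleton_self 0⟩
    · intro i hi
      rw [Finset.mem_singleton] at hi
      subst hi
      show (2:ℝ) = bvec a m 1 0
      rw [hb0]
    · exact ⟨0, Finset.mem_singleton_self 0, by rw [hb0]; norm_num⟩
    · intro i
      rw [stmt12_wvec_singleton, hb0]
      norm_num
    · intro j hj
      fin_cases j
      · simp at hj
      · rw [stmt12_rowdot_singleton, hb0]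
        show (2*ρ : ℝ) = S2 ρ 1 0 * 2
        simp [S2]
        ring
    · intro j hj
      fin_cases j
      · simp at hj
      · show bvec a m 1 1 ≤ ![(2:ℝ), 2*ρ] 1
        rw [hb1]
        show a + m ≤ 2*ρ
        linarith

set_option maxHeartbeats 2000000 in
/-- Lemma 6.1 / Corollary 6.3 (i): the minimiser of `g`, the essential and
weakly essential index sets and the constants `ĝ`, `g̃` for the auxiliary two-dimensional model
under conditions (i.C1)–(i.C3). -/
theorem stmt_12 (ρ a m : ℝ) (ha : 0 < a) (hm : 0 < m) (hρ₁ : -1 < ρ) (hρ₂ : ρ < 1)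
    (hC : (m < 1 ∧ a < 1) ∨ (m < 1 ∧ 1 ≤ a ∧ m ≤ 1 / a) ∨ (1 ≤ m ∧ a < 1 ∧ m ≤ 1 / a)) :
    (ρ < (a + m) / 2 →
      (∀ t : ℝ, 0 < t →
        gfun (S2 ρ) ![1, a] ![1, m] (Real.sqrt ((1 + a ^ 2 - 2 * a * ρ) / (1 + m ^ 2 - 2 * m * ρ)))
          ≤ gfun (S2 ρ) ![1, a] ![1, m] t) ∧
      (∀ t : ℝ, 0 < t →
        gfun (S2 ρ) ![1, a] ![1, m] t
            = gfun (S2 ρ) ![1, a] ![1, m]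
                (Real.sqrt ((1 + a ^ 2 - 2 * a * ρ) / (1 + m ^ 2 - 2 * m * ρ))) →
        t = Real.sqrt ((1 + a ^ 2 - 2 * a * ρ) / (1 + m ^ 2 - 2 * m * ρ))) ∧
      (∃ btil : Fin 2 → ℝ,
        Minimizes (S2 ρ) (bvec a m (Real.sqrt ((1 + a ^ 2 - 2 * a * ρ) / (1 + m ^ 2 - 2 * m * ρ)))) btil ∧
        EssIdx (S2 ρ) (bvec a m (Real.sqrt ((1 + a ^ 2 - 2 * a * ρ) / (1 + m ^ 2 - 2 * m * ρ)))) btil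
          (Finset.univ : Finset (Fin 2))) ∧
      Kset ρ Finset.univ (bvec a m (Real.sqrt ((1 + a ^ 2 - 2 * a * ρ) / (1 + m ^ 2 - 2 * m * ρ)))) = ∅ ∧
      gfun (S2 ρ) ![1, a] ![1, m] (Real.sqrt ((1 + a ^ 2 - 2 * a * ρ) / (1 + m ^ 2 - 2 * m * ρ)))
        = g0fun ρ a m (Real.sqrt ((1 + a ^ 2 - 2 * a * ρ) / (1 + m ^ 2 - 2 * m * ρ))) ∧
      2 / Real.sqrt ((1 + a ^ 2 - 2 * a * ρ) / (1 + m ^ 2 - 2 * m * ρ)) ^ 3 *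
          subQF (S2 ρ) Finset.univ ![1, a]
        = iteratedDeriv 2 (g0fun ρ a m)
            (Real.sqrt ((1 + a ^ 2 - 2 * a * ρ) / (1 + m ^ 2 - 2 * m * ρ)))) ∧
    (ρ = (a + m) / 2 →
      Real.sqrt ((1 + a ^ 2 - 2 * a * ρ) / (1 + m ^ 2 - 2 * m * ρ)) = 1 ∧
      (∀ t : ℝ, 0 < t → gfun (S2 ρ) ![1, a] ![1, m] 1 ≤ gfun (S2 ρ) ![1, a] ![1, m] t) ∧
      (∀ t : ℝ, 0 < t → gfun (S2 ρ) ![1, a] ![1, m] t = gfun (S2 ρ) ![1, a] ![1, m] 1 → t = 1) ∧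
      (∃ btil : Fin 2 → ℝ,
        Minimizes (S2 ρ) (bvec a m 1) btil ∧
        EssIdx (S2 ρ) (bvec a m 1) btil ({0} : Finset (Fin 2))) ∧
      Kset ρ ({0} : Finset (Fin 2)) (bvec a m 1) = {1} ∧
      gfun (S2 ρ) ![1, a] ![1, m] 1 = 4 ∧ g0fun ρ a m 1 = 4 ∧ g1fun 1 = 4 ∧
      2 / (1 : ℝ) ^ 3 * subQF (S2 ρ) ({0} : Finset (Fin 2)) ![1, a] = 2 ∧
      iteratedDeriv 2 g1fun 1 = 2) ∧
    ((a + m) / 2 < ρ →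
      (∀ t : ℝ, 0 < t → gfun (S2 ρ) ![1, a] ![1, m] 1 ≤ gfun (S2 ρ) ![1, a] ![1, m] t) ∧
      (∀ t : ℝ, 0 < t → gfun (S2 ρ) ![1, a] ![1, m] t = gfun (S2 ρ) ![1, a] ![1, m] 1 → t = 1) ∧
      (∃ btil : Fin 2 → ℝ,
        Minimizes (S2 ρ) (bvec a m 1) btil ∧
        EssIdx (S2 ρ) (bvec a m 1) btil ({0} : Finset (Fin 2))) ∧
      Kset ρ ({0} : Finset (Fin 2)) (bvec a m 1) = ∅ ∧
      gfun (S2 ρ) ![1, a] ![1, m] 1 = 4 ∧ g1fun 1 = 4 ∧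
      2 / (1 : ℝ) ^ 3 * subQF (S2 ρ) ({0} : Finset (Fin 2)) ![1, a] = 2 ∧
      iteratedDeriv 2 g1fun 1 = 2) := by
  have hD : (0:ℝ) < 1 - ρ^2 := by nlinarith
  have ham : a*m ≤ 1 := by
    rcases hC with ⟨hm1, ha1⟩ | ⟨hm1, ha1, hma⟩ | ⟨hm1, ha1, hma⟩
    · nlinarith
    · rw [le_div_iff₀ ha] at hma; nlinarith
    · rw [le_div_iff₀ ha] at hma; nlinarith
  refine ⟨?_, ?_, ?_⟩
  · -- Case R1 : ρ < (a+m)/2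
    intro hρ
    have hρ' : 2*ρ < a + m := by linarith
    set t₀ := Real.sqrt ((1 + a ^ 2 - 2 * a * ρ) / (1 + m ^ 2 - 2 * m * ρ)) with ht₀def
    have ht₀ : 0 < t₀ := stmt12_t0_pos ρ a m hρ₁ hρ₂
    have hsq : t₀^2 * (1 + m^2 - 2*ρ*m) = 1 + a^2 - 2*a*ρ := stmt12_t0_sq ρ a m hρ₁ hρ₂
    have hw0 : 0 < (1 + t₀) - ρ*(a + m*t₀) :=
      stmt12_w0_pos ρ a m t₀ hρ₁ hρ₂ ha hm hρ' ham ht₀ hsq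
    have hw1 : 0 < (a + m*t₀) - ρ*(1 + t₀) :=
      stmt12_w1_pos ρ a m t₀ hρ₁ hρ₂ ha hm hρ' ht₀ hsq
    set M' := ((1 + t₀) - ρ*(a + m*t₀)) + m*((a + m*t₀) - ρ*(1 + t₀)) with hM'def
    have hM' : 0 < M' := by
      have : 0 < m*((a + m*t₀) - ρ*(1 + t₀)) := mul_pos hm hw1
      rw [hM'def]; linarith
    have hval : gfun (S2 ρ) ![1, a] ![1, m] t₀
        = ((1 + t₀)^2 - 2*ρ*(1 + t₀)*(a + m*t₀) + (a + m*t₀)^2) / ((1 - ρ^2)*t₀) :=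
      gfun_A_val ρ a m t₀ hρ₁ hρ₂ ht₀ hw0.le hw1.le
    have hnum : (1 + t₀)^2 - 2*ρ*(1 + t₀)*(a + m*t₀) + (a + m*t₀)^2 = 2*t₀*M' := by
      rw [hM'def]; linear_combination -hsq
    have hval2 : gfun (S2 ρ) ![1, a] ![1, m] t₀ = 2*M'/(1 - ρ^2) := by
      rw [hval, hnum]
      field_simp
    have hb0 : bvec a m t₀ 0 = 1 + t₀ := by simp [bvec]
    have hb1 : bvec a m t₀ 1 = a + m*t₀ := by simp [bvec]
    refine ⟨?_, ?_, ?_, ?_, ?_, ?_⟩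
    · -- minimality
      intro t ht
      have hlb := gfun_lb_R1 ρ a m t₀ t hρ₁ hρ₂ ht₀ ht hsq hw0.le hw1.le
      rw [← hM'def] at hlb
      refine le_trans ?_ hlb
      rw [hval2, div_le_div_iff₀ hD (by positivity)]
      nlinarith [mul_nonneg (mul_nonneg hD.le hM'.le) (sq_nonneg (t₀ - t)),
        mul_pos ht₀ ht]
    · -- uniqueness
      intro t ht heq
      by_contra hne
      have hlb := gfun_lb_R1 ρ a m t₀ t hρ₁ hρ₂ ht₀ ht hsq hw0.le hw1.le
      rw [← hM'def] at hlb
      have h0 : t₀ - t ≠ 0 := sub_ne_zero.2 (Ne.symm hne)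
      have hsq2 : 0 < (t₀ - t)^2 := lt_of_le_of_ne (sq_nonneg _) (Ne.symm (pow_ne_zero 2 h0))
      have hstrict : 2*M'/(1 - ρ^2) < M'*(t₀ + t)^2/(2*t₀*(1 - ρ^2)*t) := by
        rw [div_lt_div_iff₀ hD (by positivity)]
        nlinarith [mul_pos (mul_pos hD hM') hsq2, mul_pos ht₀ ht]
      rw [heq, hval2] at hlb
      linarith
    · -- existence of btil and essential index set
      refine ⟨bvec a m t₀, ⟨le_refl _, ?_⟩, ⟨0, Finset.mem_univ 0⟩, fun i _ => rfl,
        ⟨0, Finset.mem_univ 0, by rw [hb0]; positivity⟩, ?_,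
        fun j hj => absurd (Finset.mem_univ j) hj, fun j hj => absurd (Finset.mem_univ j) hj⟩
      · intro y hy
        have hy0 : 1 + t₀ ≤ y 0 := by rw [← hb0]; exact hy 0
        have hy1 : a + m*t₀ ≤ y 1 := by rw [← hb1]; exact hy 1
        rw [qf_S2_inv ρ hρ₁ hρ₂, qf_S2_inv ρ hρ₁ hρ₂, hb0, hb1]
        exact div_le_div_of_nonneg_right
          (qf_ge_A ρ (1 + t₀) (a + m*t₀) hD (by linarith) (by linarith) (y 0) (y 1) hy0 hy1)
          hD.le
      · intro i
        rw [stmt12_wvec_univ, mulVec_S2_inv ρ hρ₁ hρ₂]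
        rcases i with ⟨i, _⟩
        fin_cases i
        · show 0 < (bvec a m t₀ 0 - ρ * bvec a m t₀ 1) / (1 - ρ^2)
          rw [hb0, hb1]
          exact div_pos hw0 hD
        · show 0 < (bvec a m t₀ 1 - ρ * bvec a m t₀ 0) / (1 - ρ^2)
          rw [hb0, hb1]
          exact div_pos hw1 hD
    · -- K = ∅
      ext j
      simp [Kset]
    · -- value of g at t₀
      rw [hval, g0fun_eq ρ a m t₀ hD.ne' ht₀.ne']
    · -- second derivative
      have hsub : subQF (S2 ρ) Finset.univ ![1, a] = (1 + a^2 - 2*a*ρ)/(1 - ρ^2) := by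
        rw [stmt12_subQF_univ, mulVec_S2_inv ρ hρ₁ hρ₂]
        simp only [dotProduct, Fin.sum_univ_two, Matrix.cons_val_zero, Matrix.cons_val_one,
          Matrix.head_cons]
        field_simp
        ring
      have hder := stmt12_iteratedDeriv_two (g0fun ρ a m)
        ((1 + a^2 - 2*a*ρ)/(1 - ρ^2)) (2*(1 + a*m - ρ*a - ρ*m)/(1 - ρ^2))
        ((1 + m^2 - 2*ρ*m)/(1 - ρ^2)) t₀ ht₀
        (fun t htp => g0fun_lin ρ a m t hD.ne' (ne_of_gt htp))
      rw [hsub, hder]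
      ring
  · -- Case R2 : ρ = (a+m)/2
    intro hρeq
    have hab : a + m ≤ 2*ρ := by rw [hρeq]; linarith
    have hAC : (1 + a ^ 2 - 2 * a * ρ) = (1 + m ^ 2 - 2 * m * ρ) := by
      rw [hρeq]; ring
    have hst : Real.sqrt ((1 + a ^ 2 - 2 * a * ρ) / (1 + m ^ 2 - 2 * m * ρ)) = 1 := by
      rw [hAC, div_self (ne_of_gt (stmt12_Apos ρ m hρ₁ hρ₂)), Real.sqrt_one]
    obtain ⟨hmin, huniq, hex, hval1⟩ := stmt12_B_branch ρ a m hρ₁ hρ₂ ha hm hab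
    have hb0 : bvec a m 1 0 = 2 := by simp [bvec]; norm_num
    have hb1 : bvec a m 1 1 = a + m := by simp [bvec]
    refine ⟨hst, hmin, huniq, hex, ?_, hval1, ?_, ?_, ?_, ?_⟩
    · -- K = {1}
      ext j
      simp only [Kset, Set.mem_setOf_eq, Set.mem_singleton_iff]
      constructor
      · rintro ⟨hj0, -⟩
        fin_cases j
        · exact absurd (Finset.mem_singleton_self 0) hj0
        · rfl
      · intro hj
        subst hj
        refine ⟨by simp, ?_⟩
        rw [stmt12_rowdot_singleton, hb0, hb1]
        have hS : S2 ρ 1 0 = ρ := by simp [S2]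
        rw [hS, hρeq]
        ring
    · -- g0fun = 4
      rw [g0fun_eq ρ a m 1 hD.ne' one_ne_zero,
        div_eq_iff (mul_ne_zero hD.ne' one_ne_zero)]
      linear_combination (2*(2*ρ - (a + m))) * hρeq
    · norm_num [g1fun]
    · rw [stmt12_subQF_singleton]
      norm_num
    · have h := stmt12_iteratedDeriv_two g1fun 1 2 1 1 one_pos
        (fun t ht => by simp only [g1fun]; field_simp; ring)
      rw [h]; norm_num
  · -- Case R3 : (a+m)/2 < ρ
    intro hρgt
    have hab : a + m ≤ 2*ρ := by linarith
    obtain ⟨hmin, huniq, hex, hval1⟩ := stmt12_B_branch ρ a m hρ₁ hρ₂ ha hm hab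
    have hb0 : bvec a m 1 0 = 2 := by simp [bvec]; norm_num
    have hb1 : bvec a m 1 1 = a + m := by simp [bvec]
    refine ⟨hmin, huniq, hex, ?_, hval1, by norm_num [g1fun], ?_, ?_⟩
    · -- K = ∅
      ext j
      simp only [Kset, Set.mem_setOf_eq, Set.mem_empty_iff_false, iff_false, not_and]
      fin_cases j
      · intro hj0
        exact absurd (Finset.mem_singleton_self 0) hj0
      · intro _
        show ¬(rowdot (S2 ρ) {0} (bvec a m 1) 1 = bvec a m 1 1)
        rw [stmt12_rowdot_singleton, hb0, hb1]
        intro h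
        have hS : S2 ρ 1 0 = ρ := by simp [S2]
        rw [hS] at h
        linarith
    · rw [stmt12_subQF_singleton]
      norm_num
    · have h := stmt12_iteratedDeriv_two g1fun 1 2 1 1 one_pos
        (fun t ht => by simp only [g1fun]; field_simp; ring)
      rw [h]; norm_num
end
end
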